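/- arXiv:2012.05086 — 12 statements merged into one kernel-verified Lean document; each statement's English description precedes it below -/
import Mathlib

section
/- Let N ≥ 1 and let T = [t_{kj}] ∈ ℂ^{N×N} be an invertible lower-triangular matrix. Let δ > 0 satisfy |t_{kk}| ≥ δ for all k, and let ρ ≥ 0 satisfy |t_{kj}| ≤ ρ·|t_{kk}| for all j < k. Then the Frobenius norm of the inverse satisfies ‖T⁻¹‖_F ≤ (1/((ρ+2)·δ)) · √((ρ+1)^{2N} + 2N(ρ+2) − 1). -/
open Matrix BigOperators

lemma lemeire_aux1 (N : ℕ) (δ ρ : ℝ) (hρ : 0 ≤ ρ)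
    (a : ℕ → ℕ → ℝ)
    (hz : ∀ n m, n < m → a n m = 0)
    (hd : ∀ m, m < N → a m m ≤ 1/δ)
    (hr : ∀ j n : ℕ, j < n → n < N → a n j ≤ ρ * ∑ i ∈ Finset.range n, a i j) :
    ∀ d m, m + d < N → ∑ i ∈ Finset.Icc m (m+d), a i m ≤ (1/δ) * (ρ+1)^d := by
  intro d
  induction d with
  | zero =>
    intro m hm
    simpa using hd m (by omega)
  | succ d ih =>
    intro m hm
    have hm' : m + d < N := by omega
    have hsub : ∑ i ∈ Finset.range (m+d+1), a i m = ∑ i ∈ Finset.Icc m (m+d), a i m := by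
      rw [← Finset.Ico_add_one_right_eq_Icc]
      refine (Finset.sum_subset ?_ ?_).symm
      · intro i hi
        rw [Finset.mem_Ico] at hi
        exact Finset.mem_range.mpr hi.2
      · intro i hi hni
        rw [Finset.mem_range] at hi
        rw [Finset.mem_Ico] at hni
        exact hz i m (by omega)
    have h1 : a (m+d+1) m ≤ ρ * ∑ i ∈ Finset.Icc m (m+d), a i m := by
      have := hr m (m+d+1) (by omega) (by omega)
      rwa [hsub] at this
    have h2 : ∑ i ∈ Finset.Icc m (m+(d+1)), a i m
        = ∑ i ∈ Finset.Icc m (m+d), a i m + a (m+d+1) m := by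
      rw [show m + (d+1) = (m+d)+1 from rfl, Finset.sum_Icc_succ_top (by omega)]
    rw [h2]
    have hih := ih m hm'
    calc ∑ i ∈ Finset.Icc m (m+d), a i m + a (m+d+1) m
        ≤ (1/δ) * (ρ+1)^d + ρ * ((1/δ) * (ρ+1)^d) :=
          add_le_add hih (h1.trans (mul_le_mul_of_nonneg_left hih hρ))
      _ = (1/δ) * (ρ+1)^(d+1) := by ring

lemma lemeire_aux2 (N : ℕ) (δ ρ : ℝ) (hρ : 0 ≤ ρ)
    (a : ℕ → ℕ → ℝ)
    (hz : ∀ n m, n < m → a n m = 0)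
    (hd : ∀ m, m < N → a m m ≤ 1/δ)
    (hr : ∀ j n : ℕ, j < n → n < N → a n j ≤ ρ * ∑ i ∈ Finset.range n, a i j) :
    ∀ j n : ℕ, j < n → n < N → a n j ≤ (ρ/δ) * (ρ+1)^(n-j-1) := by
  intro j n hjn hnN
  obtain ⟨d, rfl⟩ : ∃ d, n = j + d + 1 := ⟨n - j - 1, by omega⟩
  have hsub : ∑ i ∈ Finset.range (j+d+1), a i j = ∑ i ∈ Finset.Icc j (j+d), a i j := by
    rw [← Finset.Ico_add_one_right_eq_Icc]
    refine (Finset.sum_subset ?_ ?_).symm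
    · intro i hi
      rw [Finset.mem_Ico] at hi
      exact Finset.mem_range.mpr hi.2
    · intro i hi hni
      rw [Finset.mem_range] at hi
      rw [Finset.mem_Ico] at hni
      exact hz i j (by omega)
  have h1 := hr j (j+d+1) (by omega) hnN
  rw [hsub] at h1
  have h2 := lemeire_aux1 N δ ρ hρ a hz hd hr d j (by omega)
  calc a (j+d+1) j ≤ ρ * ((1/δ) * (ρ+1)^d) :=
        h1.trans (mul_le_mul_of_nonneg_left h2 hρ)
    _ = (ρ/δ) * (ρ+1)^(j+d+1-j-1) := by rw [show j+d+1-j-1 = d by omega]; ring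

/-- **Lemeire's bound.** If `T` is an invertible lower-triangular complex `N × N` matrix
(`N ≥ 1`) whose diagonal entries have modulus at least `δ > 0` and whose strictly
lower-triangular entries satisfy `|t_{kj}| ≤ ρ |t_{kk}|`, then the Frobenius norm of `T⁻¹`
is at most `(1/((ρ+2)δ)) √((ρ+1)^{2N} + 2N(ρ+2) − 1)`. -/
theorem lemeire_bound (N : ℕ) (hN : 1 ≤ N) (T : Matrix (Fin N) (Fin N) ℂ)
    (hTunit : IsUnit T)
    (hTlower : ∀ k j : Fin N, k < j → T k j = 0)
    (δ : ℝ) (hδ : 0 < δ) (hdiag : ∀ k : Fin N, δ ≤ ‖T k k‖)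
    (ρ : ℝ) (hρ : 0 ≤ ρ) (hoff : ∀ k j : Fin N, j < k → ‖T k j‖ ≤ ρ * ‖T k k‖) :
    Real.sqrt (∑ k : Fin N, ∑ j : Fin N, ‖T⁻¹ k j‖ ^ 2) ≤
      (1 / ((ρ + 2) * δ)) *
        Real.sqrt ((ρ + 1) ^ (2 * N) + 2 * N * (ρ + 2) - 1) := by
  obtain ⟨iT⟩ := hTunit.nonempty_invertible
  set S := T⁻¹ with hS
  have hdet : IsUnit T.det := (Matrix.isUnit_iff_isUnit_det T).mp hTunit
  have hTS : T * S = 1 := Matrix.mul_nonsing_inv T hdet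
  -- S is lower triangular
  have hT' : BlockTriangular T (OrderDual.toDual : Fin N → (Fin N)ᵒᵈ) := by
    intro i j hij
    exact hTlower i j hij
  have hSz : ∀ k j : Fin N, k < j → S k j = 0 := by
    intro k j h
    exact Matrix.blockTriangular_inv_of_blockTriangular hT'
      (show (OrderDual.toDual : Fin N → (Fin N)ᵒᵈ) j < OrderDual.toDual k from h)
  -- recurrence from T * S = 1
  have hsplit : ∀ k j : Fin N, T k k * S k j =
      (if k = j then (1:ℂ) else 0) -
        ∑ i ∈ Finset.range k.val, (if h : i < N then T k ⟨i,h⟩ * S ⟨i,h⟩ j else 0) := by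
    intro k j
    have hone : ∑ i ∈ Finset.range N, (if h : i < N then T k ⟨i,h⟩ * S ⟨i,h⟩ j else 0)
        = if k = j then (1:ℂ) else 0 := by
      have h1 := congrFun (congrFun hTS k) j
      rw [Matrix.mul_apply, Matrix.one_apply] at h1
      rw [← h1, ← Fin.sum_univ_eq_sum_range
        (fun i => if h : i < N then T k ⟨i,h⟩ * S ⟨i,h⟩ j else 0) N]
      exact Finset.sum_congr rfl (fun i _ => by simp [i.isLt])
    have htrunc : ∑ i ∈ Finset.range N, (if h : i < N then T k ⟨i,h⟩ * S ⟨i,h⟩ j else 0)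
        = ∑ i ∈ Finset.range (k.val+1), (if h : i < N then T k ⟨i,h⟩ * S ⟨i,h⟩ j else 0) := by
      refine (Finset.sum_subset (Finset.range_subset_range.mpr k.isLt) ?_).symm
      intro i hi hni
      rw [Finset.mem_range] at hi hni
      rw [dif_pos hi]
      have : k < (⟨i, hi⟩ : Fin N) := by
        simp only [Fin.lt_def, Fin.val_mk]; omega
      rw [hTlower k ⟨i, hi⟩ this, zero_mul]
    rw [htrunc, Finset.sum_range_succ] at hone
    have hlast : (if h : k.val < N then T k ⟨k.val,h⟩ * S ⟨k.val,h⟩ j else 0)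
        = T k k * S k j := by
      rw [dif_pos k.isLt]
    rw [hlast] at hone
    linear_combination hone
  have hTkk : ∀ k : Fin N, (0:ℝ) < ‖T k k‖ := fun k => lt_of_lt_of_le hδ (hdiag k)
  -- diagonal bound
  have hdS : ∀ k : Fin N, ‖S k k‖ ≤ 1/δ := by
    intro k
    have h := hsplit k k
    rw [if_pos rfl] at h
    have hzero : ∑ i ∈ Finset.range k.val,
        (if h : i < N then T k ⟨i,h⟩ * S ⟨i,h⟩ k else 0) = 0 := by
      refine Finset.sum_eq_zero fun i hi => ?_
      rw [Finset.mem_range] at hi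
      have hiN : i < N := lt_trans hi k.isLt
      rw [dif_pos hiN, hSz ⟨i, hiN⟩ k (by rw [Fin.lt_def]; exact hi), mul_zero]
    rw [hzero, sub_zero] at h
    have hnorm : ‖T k k‖ * ‖S k k‖ = 1 := by
      rw [← norm_mul, h, norm_one]
    rw [le_div_iff₀ hδ]
    calc ‖S k k‖ * δ ≤ ‖S k k‖ * ‖T k k‖ :=
          mul_le_mul_of_nonneg_left (hdiag k) (norm_nonneg _)
      _ = 1 := by rw [mul_comm]; exact hnorm
  -- off-diagonal recurrence bound
  have hoffS : ∀ k j : Fin N, j < k → ‖S k j‖ ≤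
      ρ * ∑ i ∈ Finset.range k.val, (if h : i < N then ‖S ⟨i,h⟩ j‖ else 0) := by
    intro k j hjk
    have h := hsplit k j
    rw [if_neg (by rintro rfl; exact lt_irrefl _ hjk)] at h
    rw [zero_sub] at h
    have hnb : ‖T k k‖ * ‖S k j‖ ≤
        ∑ i ∈ Finset.range k.val, (ρ * ‖T k k‖) * (if h : i < N then ‖S ⟨i,h⟩ j‖ else 0) := by
      rw [← norm_mul, h, norm_neg]
      refine (norm_sum_le _ _).trans (Finset.sum_le_sum fun i hi => ?_)
      rw [Finset.mem_range] at hi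
      have hiN : i < N := lt_trans hi k.isLt
      rw [dif_pos hiN, dif_pos hiN, norm_mul]
      exact mul_le_mul_of_nonneg_right
        (hoff k ⟨i, hiN⟩ (by rw [Fin.lt_def]; exact hi)) (norm_nonneg _)
    rw [← Finset.mul_sum] at hnb
    have h2 : ‖T k k‖ * ‖S k j‖ ≤ ‖T k k‖ *
        (ρ * ∑ i ∈ Finset.range k.val, (if h : i < N then ‖S ⟨i,h⟩ j‖ else 0)) := by
      refine hnb.trans (le_of_eq ?_)
      ring
    exact le_of_mul_le_mul_left h2 (hTkk k)
  -- the auxiliary scalar array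
  set a : ℕ → ℕ → ℝ :=
    fun n m => if h : n < N ∧ m < N then ‖S ⟨n, h.1⟩ ⟨m, h.2⟩‖ else 0 with ha
  have haF : ∀ k j : Fin N, a k.val j.val = ‖S k j‖ := by
    intro k j
    rw [ha]
    exact dif_pos ⟨k.isLt, j.isLt⟩
  have hz : ∀ n m, n < m → a n m = 0 := by
    intro n m h
    by_cases hc : n < N ∧ m < N
    · have e : a n m = ‖S ⟨n, hc.1⟩ ⟨m, hc.2⟩‖ := by rw [ha]; exact dif_pos hc
      rw [e, hSz ⟨n, hc.1⟩ ⟨m, hc.2⟩ (by rw [Fin.lt_def]; exact h), norm_zero]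
    · rw [ha]; exact dif_neg hc
  have hnn : ∀ n m, 0 ≤ a n m := by
    intro n m
    by_cases hc : n < N ∧ m < N
    · have e : a n m = ‖S ⟨n, hc.1⟩ ⟨m, hc.2⟩‖ := by rw [ha]; exact dif_pos hc
      rw [e]; exact norm_nonneg _
    · have e : a n m = 0 := by rw [ha]; exact dif_neg hc
      rw [e]
  have hd' : ∀ m, m < N → a m m ≤ 1/δ := by
    intro m hm
    have := haF ⟨m, hm⟩ ⟨m, hm⟩
    rw [this]
    exact hdS ⟨m, hm⟩
  have hr' : ∀ j n : ℕ, j < n → n < N → a n j ≤ ρ * ∑ i ∈ Finset.range n, a i j := by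
    intro j n hjn hnN
    have hjN : j < N := lt_trans hjn hnN
    have h := hoffS ⟨n, hnN⟩ ⟨j, hjN⟩ (by rw [Fin.lt_def]; exact hjn)
    rw [← haF ⟨n, hnN⟩ ⟨j, hjN⟩] at h
    refine h.trans (le_of_eq ?_)
    congr 1
    refine Finset.sum_congr rfl fun i hi => ?_
    rw [Finset.mem_range] at hi
    have hiN : i < N := lt_trans hi hnN
    rw [dif_pos hiN, ← haF ⟨i, hiN⟩ ⟨j, hjN⟩]
  have hOff : ∀ j n : ℕ, j < n → n < N → a n j ≤ (ρ/δ) * (ρ+1)^(n-j-1) :=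
    lemeire_aux2 N δ ρ hρ a hz hd' hr'
  -- row sums
  have hrow : ∀ k : Fin N, ∑ j : Fin N, ‖S k j‖^2 ≤
      (1/δ)^2 + (ρ/δ)^2 * ∑ m ∈ Finset.range k.val, ((ρ+1)^2)^m := by
    intro k
    have h1 : ∑ j : Fin N, ‖S k j‖^2 = ∑ j ∈ Finset.range N, (a k.val j)^2 := by
      rw [← Fin.sum_univ_eq_sum_range (fun j => (a k.val j)^2) N]
      exact Finset.sum_congr rfl fun j _ => by rw [haF]
    have h2 : ∑ j ∈ Finset.range N, (a k.val j)^2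
        = ∑ j ∈ Finset.range (k.val+1), (a k.val j)^2 := by
      refine (Finset.sum_subset (Finset.range_subset_range.mpr k.isLt) ?_).symm
      intro j hj hnj
      rw [Finset.mem_range] at hj hnj
      rw [hz k.val j (by omega)]
      ring
    rw [h1, h2, Finset.sum_range_succ]
    have hdb : (a k.val k.val)^2 ≤ (1/δ)^2 :=
      pow_le_pow_left₀ (hnn _ _) (hd' k.val k.isLt) 2
    have hob : ∑ j ∈ Finset.range k.val, (a k.val j)^2 ≤
        (ρ/δ)^2 * ∑ m ∈ Finset.range k.val, ((ρ+1)^2)^m := by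
      have hstep : ∀ j ∈ Finset.range k.val, (a k.val j)^2 ≤
          (fun m => (ρ/δ)^2 * ((ρ+1)^2)^(k.val-1-m)) j := by
        intro j hj
        rw [Finset.mem_range] at hj
        have := hOff j k.val hj k.isLt
        have hb : (a k.val j)^2 ≤ ((ρ/δ) * (ρ+1)^(k.val-j-1))^2 :=
          pow_le_pow_left₀ (hnn _ _) this 2
        refine hb.trans (le_of_eq ?_)
        show (ρ/δ * (ρ+1)^(k.val-j-1))^2 = (ρ/δ)^2 * ((ρ+1)^2)^(k.val-1-j)
        rw [mul_pow, ← pow_mul, show (k.val-j-1) * 2 = 2 * (k.val-1-j) by omega, pow_mul]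
      refine (Finset.sum_le_sum hstep).trans (le_of_eq ?_)
      rw [← Finset.mul_sum, Finset.sum_range_reflect (fun m => ((ρ+1)^2)^m) k.val]
    calc ∑ j ∈ Finset.range k.val, (a k.val j)^2 + (a k.val k.val)^2
        ≤ (ρ/δ)^2 * ∑ m ∈ Finset.range k.val, ((ρ+1)^2)^m + (1/δ)^2 :=
          add_le_add hob hdb
      _ = (1/δ)^2 + (ρ/δ)^2 * ∑ m ∈ Finset.range k.val, ((ρ+1)^2)^m := by ring
  -- total bound
  have htot : ∑ k : Fin N, ∑ j : Fin N, ‖S k j‖^2 ≤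
      ∑ n ∈ Finset.range N, ((1/δ)^2 + (ρ/δ)^2 * ∑ m ∈ Finset.range n, ((ρ+1)^2)^m) := by
    rw [← Fin.sum_univ_eq_sum_range
      (fun n => (1/δ)^2 + (ρ/δ)^2 * ∑ m ∈ Finset.range n, ((ρ+1)^2)^m) N]
    exact Finset.sum_le_sum fun k _ => hrow k
  -- arithmetic identity
  have hkey : ∀ n : ℕ, (1/δ)^2 + (ρ/δ)^2 * (∑ m ∈ Finset.range n, ((ρ+1)^2)^m)
      = (1/((ρ+2)*δ))^2 * ((ρ+2)^2 + ρ*(ρ+2)*(((ρ+1)^2)^n - 1)) := by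
    intro n
    have hg := geom_sum_mul ((ρ+1)^2) n
    have hd0 : δ ≠ 0 := ne_of_gt hδ
    have hr2 : (ρ+2) ≠ 0 := by positivity
    rw [← hg]
    field_simp
    ring
  have hEsum : ∑ n ∈ Finset.range N, ((ρ+2)^2 + ρ*(ρ+2)*(((ρ+1)^2)^n - 1))
      = (ρ+1)^(2*N) + 2*N*(ρ+2) - 1 := by
    have hg := geom_sum_mul ((ρ+1)^2) N
    have hx : ((ρ+1)^2)^N = (ρ+1)^(2*N) := by rw [← pow_mul]
    rw [Finset.sum_add_distrib, Finset.sum_const, Finset.card_range,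
      ← Finset.mul_sum, Finset.sum_sub_distrib, Finset.sum_const, Finset.card_range]
    simp only [nsmul_eq_mul, smul_eq_mul, mul_one]
    rw [← hx]
    linear_combination hg
  have hfin : ∑ k : Fin N, ∑ j : Fin N, ‖S k j‖^2 ≤
      (1/((ρ+2)*δ))^2 * ((ρ+1)^(2*N) + 2*N*(ρ+2) - 1) := by
    refine htot.trans (le_of_eq ?_)
    rw [Finset.sum_congr rfl (fun n _ => hkey n), ← Finset.mul_sum, hEsum]
  -- conclude with square roots
  have hE0 : (0:ℝ) ≤ (ρ+1)^(2*N) + 2*N*(ρ+2) - 1 := by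
    have h1 : (1:ℝ) ≤ (ρ+1)^(2*N) := one_le_pow₀ (by linarith)
    have h2 : (0:ℝ) ≤ 2*N*(ρ+2) := by positivity
    linarith
  have hc0 : (0:ℝ) ≤ 1/((ρ+2)*δ) := by positivity
  calc Real.sqrt (∑ k : Fin N, ∑ j : Fin N, ‖S k j‖^2)
      ≤ Real.sqrt ((1/((ρ+2)*δ))^2 * ((ρ+1)^(2*N) + 2*N*(ρ+2) - 1)) :=
        Real.sqrt_le_sqrt hfin
    _ = (1/((ρ+2)*δ)) * Real.sqrt ((ρ+1)^(2*N) + 2*N*(ρ+2) - 1) := by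
        rw [Real.sqrt_mul (sq_nonneg _), Real.sqrt_sq hc0]
end

section
/- Let N ≥ 1, let L ∈ ℂ^{N×N}, let W ∈ ℂ^{N×N} be invertible, let ỹ ∈ ℂ^N, and let S be a nonempty finite set of vectors in ℂ^N. Suppose x_ML ∈ S minimizes x ↦ ‖ỹ − Lx‖ over S, and x_WLD ∈ S minimizes x ↦ ‖W(ỹ − Lx)‖ over S. Then: (i) ‖ỹ − L·x_ML‖ ≤ ‖ỹ − L·x_WLD‖ ≤ κ(W)·‖ỹ − L·x_ML‖, where κ(W) = ‖W‖·‖W⁻¹‖ is the condition number of W; and (ii) ‖W(ỹ − L·x_WLD)‖ ≤ ‖W‖·‖ỹ − L·x_ML‖. -/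
open Matrix BigOperators

/-- The Euclidean (`ℓ²`) norm of a complex vector. -/
noncomputable def enorm {ι : Type*} [Fintype ι] (v : ι → ℂ) : ℝ :=
  Real.sqrt (∑ i, ‖v i‖ ^ 2)

/-- The `ℓ²`-operator norm (largest singular value) of a square complex matrix. -/
noncomputable def opNorm {ι : Type*} [Fintype ι] [DecidableEq ι]
    (A : Matrix ι ι ℂ) : ℝ :=
  ‖Matrix.toEuclideanCLM (𝕜 := ℂ) A‖

lemma enorm_eq {ι : Type*} [Fintype ι] (v : ι → ℂ) :
    _root_.enorm v = ‖(WithLp.equiv 2 (ι → ℂ)).symm v‖ := by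
  rw [EuclideanSpace.norm_eq]; rfl

lemma enorm_mulVec_le {ι : Type*} [Fintype ι] [DecidableEq ι]
    (A : Matrix ι ι ℂ) (v : ι → ℂ) :
    _root_.enorm (A.mulVec v) ≤ opNorm A * _root_.enorm v := by
  rw [enorm_eq, enorm_eq, WithLp.equiv_symm_apply, ← Matrix.toEuclideanCLM_toLp]
  exact (Matrix.toEuclideanCLM (𝕜 := ℂ) A).le_opNorm _

/-- **Lemma 2 (WLD distance bounds).** If `x_ML` minimizes `‖ỹ − Lx‖` and `x_WLD`
minimizes `‖W(ỹ − Lx)‖` over a nonempty finite set `S` of candidate vectors, with `W`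
invertible, then
`‖ỹ − L x_ML‖ ≤ ‖ỹ − L x_WLD‖ ≤ κ(W) ‖ỹ − L x_ML‖`, where `κ(W) = ‖W‖ ‖W⁻¹‖`,
and `‖W(ỹ − L x_WLD)‖ ≤ ‖W‖ ‖ỹ − L x_ML‖`. -/
theorem wld_distance_bound (N : ℕ) (hN : 1 ≤ N)
    (L W : Matrix (Fin N) (Fin N) ℂ) (hW : IsUnit W)
    (ytilde : Fin N → ℂ) (S : Finset (Fin N → ℂ)) (hS : S.Nonempty)
    (xML xWLD : Fin N → ℂ) (hxML : xML ∈ S) (hxWLD : xWLD ∈ S)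
    (hMLmin : ∀ x ∈ S, _root_.enorm (ytilde - L.mulVec xML) ≤ _root_.enorm (ytilde - L.mulVec x))
    (hWLDmin : ∀ x ∈ S,
      _root_.enorm (W.mulVec (ytilde - L.mulVec xWLD)) ≤ _root_.enorm (W.mulVec (ytilde - L.mulVec x))) :
    (_root_.enorm (ytilde - L.mulVec xML) ≤ _root_.enorm (ytilde - L.mulVec xWLD) ∧
      _root_.enorm (ytilde - L.mulVec xWLD) ≤
        (opNorm W * opNorm W⁻¹) * _root_.enorm (ytilde - L.mulVec xML)) ∧
    _root_.enorm (W.mulVec (ytilde - L.mulVec xWLD)) ≤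
      opNorm W * _root_.enorm (ytilde - L.mulVec xML) := by
  have hdet : IsUnit W.det := (Matrix.isUnit_iff_isUnit_det W).mp hW
  have h2 : _root_.enorm (W.mulVec (ytilde - L.mulVec xWLD)) ≤
      opNorm W * _root_.enorm (ytilde - L.mulVec xML) :=
    (hWLDmin xML hxML).trans (enorm_mulVec_le W _)
  refine ⟨⟨hMLmin xWLD hxWLD, ?_⟩, h2⟩
  have hid : W⁻¹.mulVec (W.mulVec (ytilde - L.mulVec xWLD)) = ytilde - L.mulVec xWLD := by
    rw [Matrix.mulVec_mulVec, Matrix.nonsing_inv_mul W hdet, Matrix.one_mulVec]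
  calc _root_.enorm (ytilde - L.mulVec xWLD)
      = _root_.enorm (W⁻¹.mulVec (W.mulVec (ytilde - L.mulVec xWLD))) := by rw [hid]
    _ ≤ opNorm W⁻¹ * _root_.enorm (W.mulVec (ytilde - L.mulVec xWLD)) := enorm_mulVec_le _ _
    _ ≤ opNorm W⁻¹ * (opNorm W * _root_.enorm (ytilde - L.mulVec xML)) := by
        apply mul_le_mul_of_nonneg_left h2
        exact norm_nonneg _
    _ = (opNorm W * opNorm W⁻¹) * _root_.enorm (ytilde - L.mulVec xML) := by ring
end

section
/- Let M ≥ N ≥ 2 and 1 ≤ ν ≤ N−1. Let Q, Q̃ ∈ ℂ^{M×N} satisfy QᴴQ = Q̃ᴴQ̃ = I_N. Let L, L̃ ∈ ℂ^{N×N} be lower-triangular with real positive diagonal entries, partitioned conformally as L = [[P, 0],[R, S]] and L̃ = [[P̃, 0],[R̃, S̃]], where P, P̃ are ν×ν. Let J_a and J_b be permutation matrices of sizes ν and N−ν, and let J = [[J_a, 0],[0, J_b]]. Assume Q·L·J = Q̃·L̃. Set W_p = [[I_ν, 0],[0, Ω(S)·S⁻¹]] and W̃_p = [[I_ν, 0],[0,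 Ω(S̃)·S̃⁻¹]]. Then for every y ∈ ℂ^M and every x ∈ ℂ^N, ‖W_p(Qᴴy − L·x)‖ = ‖W̃_p(Q̃ᴴy − L̃·J⁻¹·x)‖. -/
open Matrix BigOperators

/-- For an invertible complex matrix `S`, `Ω(S)` is the real diagonal matrix with `k`-th
diagonal entry `(∑_j |(S⁻¹)_{kj}|²)^{-1/2}`, i.e. `Ω(S) = (diag(S⁻¹ S⁻ᴴ))^{-1/2}`. -/
noncomputable def Omega {ι : Type*} [Fintype ι] [DecidableEq ι]
    (S : Matrix ι ι ℂ) : Matrix ι ι ℂ :=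
  Matrix.diagonal fun k => (((Real.sqrt (∑ j, ‖S⁻¹ k j‖ ^ 2))⁻¹ : ℝ) : ℂ)


lemma sum_sq_eq_re_dot {n : Type*} [Fintype n] (u : n → ℂ) :
    (∑ i, ‖u i‖ ^ 2 : ℝ) = (star u ⬝ᵥ u).re := by
  rw [dotProduct, Complex.re_sum]
  refine Finset.sum_congr rfl fun i _ => ?_
  simp [Pi.star_apply, Complex.star_def, Complex.normSq_eq_norm_sq,
    ← Complex.normSq_eq_conj_mul_self, ← Complex.ofReal_pow]

lemma unitary_sum_sq {n : Type*} [Fintype n] [DecidableEq n] {U : Matrix n n ℂ}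
    (hU : Uᴴ * U = 1) (w : n → ℂ) :
    (∑ i, ‖(U *ᵥ w) i‖ ^ 2 : ℝ) = ∑ i, ‖w i‖ ^ 2 := by
  rw [sum_sq_eq_re_dot, sum_sq_eq_re_dot]
  congr 1
  rw [star_mulVec, ← dotProduct_mulVec, mulVec_mulVec, hU, one_mulVec]

lemma row_mul_unitary_sum_sq {n : Type*} [Fintype n] [DecidableEq n] {D : Matrix n n ℂ}
    (hD : D * Dᴴ = 1) (Mx : Matrix n n ℂ) (k : n) :
    (∑ j, ‖(Mx * D) k j‖ ^ 2 : ℝ) = ∑ j, ‖Mx k j‖ ^ 2 := by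
  have hU : (Dᵀ)ᴴ * Dᵀ = 1 := by
    have h1 : (Dᵀ)ᴴ = (Dᴴ)ᵀ := by ext i j; simp
    rw [h1, ← transpose_mul, hD, transpose_one]
  have := unitary_sum_sq hU (Mx k)
  rw [← this]
  refine Finset.sum_congr rfl fun j _ => ?_
  congr 1
  simp [Matrix.mul_apply, Matrix.mulVec, dotProduct, transpose_apply, mul_comm]

lemma lowtri_isUnit_det {n : ℕ} (T : Matrix (Fin n) (Fin n) ℂ)
    (h0 : ∀ i j : Fin n, i < j → T i j = 0)
    (hd : ∀ i : Fin n, ∃ r : ℝ, 0 < r ∧ T i i = (r : ℂ)) : IsUnit T.det := by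
  have hbt : T.BlockTriangular OrderDual.toDual := fun i j h => h0 i j h
  rw [Matrix.det_of_lowerTriangular T hbt, isUnit_iff_ne_zero]
  apply Finset.prod_ne_zero_iff.2
  intro i _
  obtain ⟨r, hr, hTi⟩ := hd i
  rw [hTi]
  exact_mod_cast hr.ne'

lemma permMatrix_mul_inv {n : Type*} [Fintype n] [DecidableEq n] (σ : Equiv.Perm n) :
    (σ.permMatrix ℂ) * ((σ⁻¹).permMatrix ℂ) = 1 := by
  rw [Equiv.Perm.permMatrix, Equiv.Perm.permMatrix, ← PEquiv.toMatrix_trans,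
    ← Equiv.toPEquiv_trans]
  simp [Equiv.self_trans_symm, Equiv.Perm.one_def, Equiv.toPEquiv_refl, Equiv.Perm.inv_def]

lemma diagonal_perm_comm {n : Type*} [Fintype n] [DecidableEq n] (σ : Equiv.Perm n)
    (d : n → ℂ) :
    Matrix.diagonal (fun i => d (σ i)) * σ.permMatrix ℂ = σ.permMatrix ℂ * Matrix.diagonal d := by
  ext i j
  rw [Matrix.diagonal_mul, Matrix.mul_diagonal]
  simp only [Equiv.Perm.permMatrix, PEquiv.toMatrix_apply, Equiv.toPEquiv_apply,
    Option.mem_some_iff]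
  by_cases h : σ i = j
  · subst h; simp
  · simp [h, (by exact fun hh => h hh.symm : ¬ j = σ i)]

lemma permMatrix_mul_sum_sq {n : Type*} [Fintype n] [DecidableEq n] (σ : Equiv.Perm n)
    (N : Matrix n n ℂ) (w : n → ℂ) :
    (∑ i, ‖((σ.permMatrix ℂ * N) *ᵥ w) i‖ ^ 2 : ℝ) = ∑ i, ‖(N *ᵥ w) i‖ ^ 2 := by
  rw [Equiv.Perm.permMatrix, PEquiv.toMatrix_toPEquiv_mul]
  have h : ∀ i, ((N.submatrix σ id) *ᵥ w) i = (N *ᵥ w) (σ i) := by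
    intro i; simp [Matrix.mulVec, dotProduct]
  simp_rw [h]
  exact Equiv.sum_comp σ (fun i => ‖(N *ᵥ w) i‖ ^ 2)

lemma enorm_elim {a1 a2 : Type*} [Fintype a1] [Fintype a2] (a : a1 → ℂ) (b : a2 → ℂ) :
    Real.sqrt ((∑ i, ‖a i‖ ^ 2) + ∑ i, ‖b i‖ ^ 2)
      = Real.sqrt (∑ i : a1 ⊕ a2, ‖Sum.elim a b i‖ ^ 2) := by
  rw [Fintype.sum_sum_type]
  simp


/-- **Lemma 3 (invariance of WLD metrics under within-block permutations).**
With `L = [[P,0],[R,S]]`, `L̃ = [[P̃,0],[R̃,S̃]]` lower-triangular (with real positive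
diagonals), `QᴴQ = Q̃ᴴQ̃ = I`, `J = [[J_a,0],[0,J_b]]` a block-diagonal permutation matrix,
and `Q L J = Q̃ L̃`, the punctured distances agree:
`‖W_p(Qᴴy − Lx)‖ = ‖W̃_p(Q̃ᴴy − L̃ J⁻¹ x)‖` for all `y`, `x`, where
`W_p = [[I,0],[0,Ω(S)S⁻¹]]` and `W̃_p = [[I,0],[0,Ω(S̃)S̃⁻¹]]`. -/
theorem wld_perm_distances (M ν m : ℕ) (hν : 1 ≤ ν) (hm : 1 ≤ m) (hMN : ν + m ≤ M)
    (Q Qt : Matrix (Fin M) (Fin ν ⊕ Fin m) ℂ)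
    (hQ : Qᴴ * Q = 1) (hQt : Qtᴴ * Qt = 1)
    (P Pt : Matrix (Fin ν) (Fin ν) ℂ) (R Rt : Matrix (Fin m) (Fin ν) ℂ)
    (S St : Matrix (Fin m) (Fin m) ℂ)
    (hP : ∀ i j : Fin ν, i < j → P i j = 0)
    (hPdiag : ∀ i : Fin ν, ∃ r : ℝ, 0 < r ∧ P i i = (r : ℂ))
    (hS : ∀ i j : Fin m, i < j → S i j = 0)
    (hSdiag : ∀ i : Fin m, ∃ r : ℝ, 0 < r ∧ S i i = (r : ℂ))
    (hPt : ∀ i j : Fin ν, i < j → Pt i j = 0)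
    (hPtdiag : ∀ i : Fin ν, ∃ r : ℝ, 0 < r ∧ Pt i i = (r : ℂ))
    (hSt : ∀ i j : Fin m, i < j → St i j = 0)
    (hStdiag : ∀ i : Fin m, ∃ r : ℝ, 0 < r ∧ St i i = (r : ℂ))
    (Ja : Equiv.Perm (Fin ν)) (Jb : Equiv.Perm (Fin m))
    (hQLJ : Q * Matrix.fromBlocks P 0 R S *
        Matrix.fromBlocks (Ja.permMatrix ℂ) 0 0 (Jb.permMatrix ℂ) =
      Qt * Matrix.fromBlocks Pt 0 Rt St) :
    ∀ (y : Fin M → ℂ) (x : Fin ν ⊕ Fin m → ℂ),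
      _root_.enorm ((Matrix.fromBlocks (1 : Matrix (Fin ν) (Fin ν) ℂ) 0 0 (Omega S * S⁻¹)).mulVec
          (Qᴴ.mulVec y - (Matrix.fromBlocks P 0 R S).mulVec x)) =
      _root_.enorm ((Matrix.fromBlocks (1 : Matrix (Fin ν) (Fin ν) ℂ) 0 0 (Omega St * St⁻¹)).mulVec
          (Qtᴴ.mulVec y - (Matrix.fromBlocks Pt 0 Rt St).mulVec
            ((Matrix.fromBlocks (Ja.permMatrix ℂ) 0 0 (Jb.permMatrix ℂ))⁻¹.mulVec x))) := by
  intro y x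
  have hPtd := lowtri_isUnit_det Pt hPt hPtdiag
  have hStd := lowtri_isUnit_det St hSt hStdiag
  set Jam := Ja.permMatrix ℂ with hJamdef
  set Jbm := Jb.permMatrix ℂ with hJbmdef
  set L := Matrix.fromBlocks P 0 R S with hLdef
  set Lt := Matrix.fromBlocks Pt 0 Rt St with hLtdef
  set Jm := Matrix.fromBlocks Jam 0 0 Jbm with hJdef
  have hLtd : IsUnit Lt.det := by
    rw [hLtdef, Matrix.det_fromBlocks_zero₁₂]; exact hPtd.mul hStd
  have hJmul : Jm * Matrix.fromBlocks ((Ja⁻¹).permMatrix ℂ) 0 0 ((Jb⁻¹).permMatrix ℂ) = 1 := by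
    rw [hJdef, Matrix.fromBlocks_multiply]
    simp [hJamdef, hJbmdef, permMatrix_mul_inv, Matrix.fromBlocks_one]
  have hJd : IsUnit Jm.det := Matrix.isUnit_det_of_right_inverse hJmul
  set Z := L * Jm * Lt⁻¹ with hZdef
  have hQtZ : Qt = Q * Z := by
    have h1 : Q * Z = Q * L * Jm * Lt⁻¹ := by simp only [hZdef, Matrix.mul_assoc]
    rw [h1, hQLJ, Matrix.mul_nonsing_inv_cancel_right _ _ hLtd]
  have hZLt : Z * Lt = L * Jm := Matrix.nonsing_inv_mul_cancel_right _ _ hLtd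
  have hZu : Zᴴ * Z = 1 := by
    have h2 : Qtᴴ * Qt = Zᴴ * Z := by
      rw [hQtZ, Matrix.conjTranspose_mul, Matrix.mul_assoc,
        ← Matrix.mul_assoc Qᴴ Q Z, hQ, Matrix.one_mul]
    rw [← h2]; exact hQt
  set A := Z.toBlocks₁₁ with hAdef
  set B := Z.toBlocks₁₂ with hBdef
  set C := Z.toBlocks₂₁ with hCdef
  set D := Z.toBlocks₂₂ with hDdef
  have hZblocks : Z = Matrix.fromBlocks A B C D := (Matrix.fromBlocks_toBlocks Z).symm
  have hmul : Matrix.fromBlocks (A * Pt + B * Rt) (B * St) (C * Pt + D * Rt) (D * St)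
      = Matrix.fromBlocks (P * Jam) 0 (R * Jam) (S * Jbm) := by
    have h3 := hZLt
    rw [hZblocks, hLtdef, hLdef, hJdef, Matrix.fromBlocks_multiply,
      Matrix.fromBlocks_multiply] at h3
    simpa using h3
  obtain ⟨-, hBSt, -, hDSt⟩ := Matrix.fromBlocks_inj.mp hmul
  have hB0 : B = 0 := by
    calc B = B * St * St⁻¹ := (Matrix.mul_nonsing_inv_cancel_right _ _ hStd).symm
    _ = 0 := by rw [hBSt, Matrix.zero_mul]
  have hZu' : Matrix.fromBlocks (Aᴴ * A + Cᴴ * C) (Cᴴ * D) (Dᴴ * C) (Dᴴ * D)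
      = Matrix.fromBlocks 1 0 0 1 := by
    have h4 := hZu
    rw [hZblocks, hB0, Matrix.fromBlocks_conjTranspose, Matrix.fromBlocks_multiply,
      ← Matrix.fromBlocks_one] at h4
    simpa using h4
  obtain ⟨hAC, -, hDC, hDu⟩ := Matrix.fromBlocks_inj.mp hZu'
  have hDDH : D * Dᴴ = 1 := mul_eq_one_comm.mp hDu
  have hC0 : C = 0 := by
    calc C = D * Dᴴ * C := by rw [hDDH, Matrix.one_mul]
    _ = D * (Dᴴ * C) := Matrix.mul_assoc _ _ _
    _ = 0 := by rw [hDC, Matrix.mul_zero]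
  have hAu : Aᴴ * A = 1 := by
    rw [hC0] at hAC
    simpa using hAC
  have hZfin : Z = Matrix.fromBlocks A 0 0 D := by rw [hZblocks, hB0, hC0]
  -- the vector identity
  have hLtJ : Lt * Jm⁻¹ = Zᴴ * L := by
    have hLt2 : Lt = Zᴴ * (L * Jm) := by
      rw [← hZLt, ← Matrix.mul_assoc, hZu, Matrix.one_mul]
    rw [hLt2, ← Matrix.mul_assoc, Matrix.mul_nonsing_inv_cancel_right _ _ hJd]
  have hvec : Qtᴴ *ᵥ y - Lt *ᵥ (Jm⁻¹ *ᵥ x) = Zᴴ *ᵥ (Qᴴ *ᵥ y - L *ᵥ x) := by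
    rw [hQtZ, Matrix.conjTranspose_mul]
    simp only [Matrix.mulVec_sub, Matrix.mulVec_mulVec]
    rw [hLtJ]
  -- key matrix identity for the lower-right block
  have hDinv : Dᴴ = D⁻¹ := (Matrix.inv_eq_left_inv hDu).symm
  have hJbinv : Jbm⁻¹ = (Jb⁻¹).permMatrix ℂ :=
    Matrix.inv_eq_right_inv (permMatrix_mul_inv Jb)
  have hStinvD : St⁻¹ * Dᴴ = Jbm⁻¹ * S⁻¹ := by
    rw [hDinv, ← Matrix.mul_inv_rev, hDSt, Matrix.mul_inv_rev]
  have hStinv : St⁻¹ = Jbm⁻¹ * S⁻¹ * D := by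
    calc St⁻¹ = St⁻¹ * Dᴴ * D := by rw [Matrix.mul_assoc, hDu, Matrix.mul_one]
    _ = Jbm⁻¹ * S⁻¹ * D := by rw [hStinvD]
  have hOmegaSt : Omega St
      = Matrix.diagonal (fun k =>
          (((Real.sqrt (∑ j, ‖S⁻¹ ((Jb⁻¹ : Equiv.Perm (Fin m)) k) j‖ ^ 2))⁻¹ : ℝ) : ℂ)) := by
    unfold Omega
    apply congrArg Matrix.diagonal
    funext k
    norm_cast
    congr 1
    have hrow : ∀ j, St⁻¹ k j = (S⁻¹ * D) ((Jb⁻¹ : Equiv.Perm (Fin m)) k) j := by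
      intro j
      rw [hStinv, hJbinv, Matrix.mul_assoc, Equiv.Perm.permMatrix,
        PEquiv.toMatrix_toPEquiv_mul]
      rfl
    simp_rw [hrow]
    rw [row_mul_unitary_sum_sq hDDH]
  have hOmegaS : Omega S
      = Matrix.diagonal (fun k => (((Real.sqrt (∑ j, ‖S⁻¹ k j‖ ^ 2))⁻¹ : ℝ) : ℂ)) := rfl
  have hcomm := diagonal_perm_comm (Jb⁻¹)
      (fun k => (((Real.sqrt (∑ j, ‖S⁻¹ k j‖ ^ 2))⁻¹ : ℝ) : ℂ))
  have hkey : Omega St * St⁻¹ * Dᴴ = (Jb⁻¹).permMatrix ℂ * (Omega S * S⁻¹) := by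
    rw [Matrix.mul_assoc, hStinvD, ← Matrix.mul_assoc, hJbinv, hOmegaSt, hOmegaS]
    rw [← Matrix.mul_assoc ((Jb⁻¹).permMatrix ℂ)]
    rw [← hcomm]
  -- assemble
  rw [hvec]
  set v := Qᴴ *ᵥ y - L *ᵥ x with hvdef
  have hWZ : (Matrix.fromBlocks (1 : Matrix (Fin ν) (Fin ν) ℂ) 0 0 (Omega St * St⁻¹)) *ᵥ
      (Zᴴ *ᵥ v) = Sum.elim (Aᴴ *ᵥ (v ∘ Sum.inl))
        (((Jb⁻¹).permMatrix ℂ * (Omega S * S⁻¹)) *ᵥ (v ∘ Sum.inr)) := by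
    rw [Matrix.mulVec_mulVec, hZfin, Matrix.fromBlocks_conjTranspose,
      Matrix.fromBlocks_multiply]
    rw [Matrix.fromBlocks_mulVec]
    simp [hkey, Matrix.mul_assoc]
  have hW : (Matrix.fromBlocks (1 : Matrix (Fin ν) (Fin ν) ℂ) 0 0 (Omega S * S⁻¹)) *ᵥ v
      = Sum.elim (v ∘ Sum.inl) ((Omega S * S⁻¹) *ᵥ (v ∘ Sum.inr)) := by
    rw [Matrix.fromBlocks_mulVec]
    simp
  rw [hW, hWZ]
  unfold _root_.enorm
  rw [← enorm_elim, ← enorm_elim]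
  congr 1
  · congr 1
    · have hAAH : (Aᴴ)ᴴ * Aᴴ = 1 := by
        rw [Matrix.conjTranspose_conjTranspose]
        exact mul_eq_one_comm.mp hAu
      exact (unitary_sum_sq hAAH (v ∘ Sum.inl)).symm
    · exact (permMatrix_mul_sum_sq (Jb⁻¹) _ _).symm
end

section
/- Let S ∈ ℂ^{m×m} be lower-triangular with real positive diagonal entries. Then for each k, the k-th diagonal entry of Ω(S)·S⁻¹ is a real number λ_k with 0 < λ_k ≤ 1. -/
open Matrix BigOperators

/-- If `S` is lower-triangular with real positive diagonal entries, then every diagonal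
entry of `Ω(S) S⁻¹` is a real number `λ` with `0 < λ ≤ 1`. -/
theorem omega_Sinv_diag_bounds (m : ℕ) (S : Matrix (Fin m) (Fin m) ℂ)
    (hlower : ∀ i j : Fin m, i < j → S i j = 0)
    (hdiag : ∀ i : Fin m, ∃ r : ℝ, 0 < r ∧ S i i = (r : ℂ)) :
    ∀ k : Fin m, ∃ lam : ℝ, 0 < lam ∧ lam ≤ 1 ∧ (Omega S * S⁻¹) k k = (lam : ℂ) := by
  intro k
  have hbt : S.BlockTriangular OrderDual.toDual := fun i j hij => hlower i j hij
  have hdet : S.det = ∏ i, S i i := Matrix.det_of_lowerTriangular S hbt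
  have hdet0 : IsUnit S.det := by
    rw [hdet]
    apply IsUnit.mk0
    apply Finset.prod_ne_zero_iff.2
    intro i _
    obtain ⟨r, hr, hSr⟩ := hdiag i
    rw [hSr]
    exact_mod_cast hr.ne'
  haveI : Invertible S := S.invertibleOfIsUnitDet hdet0
  have hbtinv : S⁻¹.BlockTriangular OrderDual.toDual :=
    blockTriangular_inv_of_blockTriangular hbt
  -- diagonal of inverse
  obtain ⟨r, hr, hSr⟩ := hdiag k
  have hone : (S * S⁻¹) k k = 1 := by
    rw [Matrix.mul_nonsing_inv S hdet0]; simp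
  have hsum : ∑ j, S k j * S⁻¹ j k = 1 := by
    simpa [Matrix.mul_apply] using hone
  have hdiaginv : S⁻¹ k k = (r : ℂ)⁻¹ := by
    have : S k k * S⁻¹ k k = 1 := by
      rw [← hsum]
      refine (Finset.sum_eq_single_of_mem (f := fun j => S k j * S⁻¹ j k) k (Finset.mem_univ k) ?_).symm
      intro j _ hjk
      show S k j * S⁻¹ j k = 0
      rcases lt_or_gt_of_ne hjk with h | h
      · rw [hbtinv h, mul_zero]
      · rw [hlower k j h, zero_mul]
    field_simp [hSr] at this ⊢
    rw [mul_comm] at this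
    rw [eq_div_iff (by exact_mod_cast hr.ne')]
    rwa [hSr] at this
  set t : ℝ := ∑ j, ‖S⁻¹ k j‖ ^ 2 with ht
  have hle : (r⁻¹) ^ 2 ≤ t := by
    have : ‖S⁻¹ k k‖ ^ 2 ≤ t :=
      Finset.single_le_sum (f := fun j => ‖S⁻¹ k j‖ ^ 2)
        (fun j _ => sq_nonneg _) (Finset.mem_univ k)
    rwa [hdiaginv, ← Complex.ofReal_inv, Complex.norm_real,
      Real.norm_eq_abs, abs_of_pos (inv_pos.2 hr)] at this
  have hrpos : 0 < r⁻¹ := inv_pos.2 hr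
  have htpos : 0 < t := lt_of_lt_of_le (pow_pos hrpos 2) hle
  refine ⟨(Real.sqrt t)⁻¹ * r⁻¹, ?_, ?_, ?_⟩
  · exact mul_pos (inv_pos.2 (Real.sqrt_pos.2 htpos)) hrpos
  · rw [← div_eq_inv_mul]
    apply div_le_one_of_le₀ _ (Real.sqrt_nonneg t)
    rw [← Real.sqrt_sq hrpos.le]
    exact Real.sqrt_le_sqrt hle
  · rw [Omega, Matrix.diagonal_mul, hdiaginv]
    push_cast
    ring
end

section
/- Let M ≥ N ≥ 1, let Es, N0 > 0 be reals with β = Es/N0. Let Q ∈ ℂ^{M×N} satisfy QᴴQ = I_N, let L ∈ ℂ^{N×N}, and let W_p ∈ ℂ^{N×N} satisfy diag(W_pW_pᴴ) = I_N. Set H = Q·L, L_p = W_p·L, G_p = (1/N0)·L_pᴴL_p, and F_p = (1/N0)·Q·W_pᴴ·L_p. Then G_p + (1/Es)·I_N, I_N + β·L_pᴴL_p and I_N + β·L_pL_pᴴ are positive-definite Hermitian matrices (hence invertible with positive real determinants), and the following identity holds: Es·Re Tr(G_p) + N·ln(Es) + ln det(G_p + (1/Es)·I_N) − Re Tr( F_pᴴ·(Es·H·Hᴴ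 + N0·I_M)·F_p·(G_p + (1/Es)·I_N)⁻¹ ) = ln det(I_N + β·L_pᴴL_p) − Re Tr( (I_N − W_pW_pᴴ)·(I_N + β·L_pL_pᴴ)⁻¹ ). (This common value is the lower bound I_LB^WLD on the achievable information rate of the WLD detector with Gaussian inputs established in Theorem 1.) -/
open Matrix BigOperators
open scoped ComplexOrder

-- helper: nonneg real scalar times Kᴴ K is PSD
lemma aux_smul_psd {N : ℕ} {r : ℝ} (hr : 0 ≤ r) (K : Matrix (Fin N) (Fin N) ℂ) :
    (((r:ℂ)) • (Kᴴ * K)).PosSemidef := by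
  have h := Matrix.posSemidef_conjTranspose_mul_self ((Real.sqrt r : ℂ) • K)
  rwa [conjTranspose_smul, Matrix.smul_mul, Matrix.mul_smul, smul_smul,
    RCLike.star_def, Complex.conj_ofReal, ← Complex.ofReal_mul,
    Real.mul_self_sqrt hr] at h

lemma aux_smul_posdef {N : ℕ} {r : ℝ} (hr : 0 < r) {X : Matrix (Fin N) (Fin N) ℂ}
    (hX : X.PosDef) : (((r:ℂ)) • X).PosDef := by
  refine Matrix.PosDef.of_dotProduct_mulVec_pos ?_ (fun x hx => ?_)
  · show (((r:ℂ)) • X)ᴴ = _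
    rw [conjTranspose_smul, RCLike.star_def, Complex.conj_ofReal, hX.1.eq]
  · have h := hX.dotProduct_mulVec_pos hx
    rw [Complex.lt_def] at h
    simp only [Complex.zero_re, Complex.zero_im] at h
    rw [smul_mulVec, dotProduct_smul, smul_eq_mul, Complex.lt_def]
    constructor
    · simpa [Complex.mul_re, ← h.2] using mul_pos hr h.1
    · simp [Complex.mul_im, ← h.2]
set_option maxHeartbeats 1000000 in
/-- **Theorem 1 (AIR lower bound of the WLD detector, Gaussian inputs).**
With `H = QL` (`QᴴQ = I`, `M ≥ N ≥ 1`), `L_p = W_p L` where the rows of `W_p` have unit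
norm (`diag(W_p W_pᴴ) = I`), `G_p = (1/N₀) L_pᴴ L_p`, `F_p = (1/N₀) Q W_pᴴ L_p`, and
`β = E_s/N₀`: the matrices `G_p + (1/E_s) I`, `I + β L_pᴴ L_p` and `I + β L_p L_pᴴ` are
positive definite Hermitian with positive real determinants, and
`E_s Re Tr G_p + N ln E_s + ln det(G_p + (1/E_s)I)
  − Re Tr(F_pᴴ (E_s H Hᴴ + N₀ I) F_p (G_p + (1/E_s)I)⁻¹)
 = ln det(I + β L_pᴴ L_p) − Re Tr((I − W_p W_pᴴ)(I + β L_p L_pᴴ)⁻¹)`. -/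
theorem ILB_WLD (M N : ℕ) (hN : 1 ≤ N) (hMN : N ≤ M)
    (Es N0 β : ℝ) (hEs : 0 < Es) (hN0 : 0 < N0) (hβ : β = Es / N0)
    (Q : Matrix (Fin M) (Fin N) ℂ) (hQ : Qᴴ * Q = 1)
    (L Wp : Matrix (Fin N) (Fin N) ℂ)
    (hWp : Matrix.diagonal (fun k => (Wp * Wpᴴ) k k) = (1 : Matrix (Fin N) (Fin N) ℂ))
    (H : Matrix (Fin M) (Fin N) ℂ) (hH : H = Q * L)
    (Lp : Matrix (Fin N) (Fin N) ℂ) (hLp : Lp = Wp * L)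
    (Gp : Matrix (Fin N) (Fin N) ℂ) (hGp : Gp = ((N0 : ℂ))⁻¹ • (Lpᴴ * Lp))
    (Fp : Matrix (Fin M) (Fin N) ℂ) (hFp : Fp = ((N0 : ℂ))⁻¹ • (Q * Wpᴴ * Lp)) :
    ((Gp + ((Es : ℂ))⁻¹ • 1).PosDef ∧
      0 < (Gp + ((Es : ℂ))⁻¹ • 1).det.re ∧ (Gp + ((Es : ℂ))⁻¹ • 1).det.im = 0) ∧
    ((1 + (β : ℂ) • (Lpᴴ * Lp)).PosDef ∧
      0 < (1 + (β : ℂ) • (Lpᴴ * Lp)).det.re ∧ (1 + (β : ℂ) • (Lpᴴ * Lp)).det.im = 0) ∧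
    ((1 + (β : ℂ) • (Lp * Lpᴴ)).PosDef ∧
      0 < (1 + (β : ℂ) • (Lp * Lpᴴ)).det.re ∧ (1 + (β : ℂ) • (Lp * Lpᴴ)).det.im = 0) ∧
    Es * (Matrix.trace Gp).re + (N : ℝ) * Real.log Es +
        Real.log (Gp + ((Es : ℂ))⁻¹ • 1).det.re -
        (Matrix.trace (Fpᴴ * ((Es : ℂ) • (H * Hᴴ) + (N0 : ℂ) • 1) * Fp *
          (Gp + ((Es : ℂ))⁻¹ • 1)⁻¹)).re =
      Real.log (1 + (β : ℂ) • (Lpᴴ * Lp)).det.re -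
        (Matrix.trace ((1 - Wp * Wpᴴ) * (1 + (β : ℂ) • (Lp * Lpᴴ))⁻¹)).re := by
  have hβpos : 0 < β := hβ ▸ div_pos hEs hN0
  have hN0c : (N0:ℂ) ≠ 0 := Complex.ofReal_ne_zero.mpr hN0.ne'
  have hEsc : (Es:ℂ) ≠ 0 := Complex.ofReal_ne_zero.mpr hEs.ne'
  have hβc : (β:ℂ) = (Es:ℂ) / (N0:ℂ) := by rw [hβ]; push_cast; ring
  set A : Matrix (Fin N) (Fin N) ℂ := Lpᴴ * Lp with hA
  set C : Matrix (Fin N) (Fin N) ℂ := Lp * Lpᴴ with hC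
  set B : Matrix (Fin N) (Fin N) ℂ := Wp * Wpᴴ with hB
  set P : Matrix (Fin N) (Fin N) ℂ := 1 + (β:ℂ) • A with hP
  set R : Matrix (Fin N) (Fin N) ℂ := 1 + (β:ℂ) • C with hR
  -- positive definiteness
  have hβA : ((β:ℂ) • A).PosSemidef := aux_smul_psd hβpos.le Lp
  have hβC : ((β:ℂ) • C).PosSemidef := by
    have := aux_smul_psd hβpos.le Lpᴴ
    rwa [conjTranspose_conjTranspose] at this
  have hPpd : P.PosDef := Matrix.PosDef.add_posSemidef Matrix.PosDef.one hβA
  have hRpd : R.PosDef := Matrix.PosDef.add_posSemidef Matrix.PosDef.one hβC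
  have hscale : Gp + ((Es:ℂ))⁻¹ • 1 = ((Es:ℂ))⁻¹ • P := by
    have hc : ((Es:ℂ))⁻¹ * (β:ℂ) = ((N0:ℂ))⁻¹ := by
      rw [hβc]; field_simp
    rw [hGp, hP, smul_add, smul_smul, hc, add_comm, hA]
  have h1pd : (Gp + ((Es:ℂ))⁻¹ • 1).PosDef := by
    rw [hscale, show ((Es:ℂ))⁻¹ = ((Es⁻¹ : ℝ) : ℂ) by push_cast; ring]
    exact aux_smul_posdef (inv_pos.mpr hEs) hPpd
  have detsplit : ∀ {X : Matrix (Fin N) (Fin N) ℂ}, X.PosDef → 0 < X.det.re ∧ X.det.im = 0 := by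
    intro X hX
    have h := hX.det_pos
    rw [Complex.lt_def] at h
    simp only [Complex.zero_re, Complex.zero_im] at h
    exact ⟨h.1, h.2.symm⟩
  have hPdet : IsUnit P.det := hPpd.det_pos.ne'.isUnit
  have hRdet : IsUnit R.det := hRpd.det_pos.ne'.isUnit
  set S : Matrix (Fin N) (Fin N) ℂ := P⁻¹ with hS
  set Ti : Matrix (Fin N) (Fin N) ℂ := R⁻¹ with hTi
  have hPS : P * S = 1 := Matrix.mul_nonsing_inv P hPdet
  have hSP : S * P = 1 := Matrix.nonsing_inv_mul P hPdet
  have hRT : R * Ti = 1 := Matrix.mul_nonsing_inv R hRdet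
  have hTR : Ti * R = 1 := Matrix.nonsing_inv_mul R hRdet
  -- push-through identities
  have hLpP : Lp * P = R * Lp := by
    simp only [hP, hR, hA, hC, Matrix.mul_add, Matrix.add_mul, Matrix.mul_one,
      Matrix.one_mul, Matrix.mul_smul, Matrix.smul_mul, Matrix.mul_assoc]
  have hpush : Lp * S = Ti * Lp := by
    calc Lp * S = Ti * (R * Lp) * S := by rw [← Matrix.mul_assoc, hTR, Matrix.one_mul]
    _ = Ti * (Lp * P) * S := by rw [hLpP]
    _ = Ti * Lp * (P * S) := by rw [Matrix.mul_assoc, Matrix.mul_assoc, Matrix.mul_assoc]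
    _ = Ti * Lp := by rw [hPS, Matrix.mul_one]
  have hCR : C * R = R * C := by
    rw [hR, Matrix.mul_add, Matrix.add_mul, Matrix.mul_one, Matrix.one_mul,
      Matrix.mul_smul, Matrix.smul_mul]
  have hCT : C * Ti = Ti * C := by
    have h := congrArg (fun X => Ti * X * Ti) hCR
    simp only [Matrix.mul_assoc] at h
    rw [hRT, Matrix.mul_one, ← Matrix.mul_assoc Ti R, hTR, Matrix.one_mul] at h
    exact h.symm
  have hCTi : (β:ℂ) • (C * Ti) = 1 - Ti := by
    have h := hRT
    rw [hR, Matrix.add_mul, Matrix.one_mul, Matrix.smul_mul] at h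
    linear_combination (norm := module) h
  have hAS : (β:ℂ) • (A * S) = 1 - S := by
    have h := hPS
    rw [hP, Matrix.add_mul, Matrix.one_mul, Matrix.smul_mul] at h
    linear_combination (norm := module) h
  have htrACS : Matrix.trace (A * S) = Matrix.trace (C * Ti) := by
    rw [hA, Matrix.mul_assoc, hpush, Matrix.trace_mul_comm, Matrix.mul_assoc, ← hC, hCT]
  have htrS : Matrix.trace S = Matrix.trace Ti := by
    have h1 := congrArg Matrix.trace hAS
    have h2 := congrArg Matrix.trace hCTi
    rw [Matrix.trace_smul, Matrix.trace_sub, smul_eq_mul, htrACS] at h1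
    rw [Matrix.trace_smul, Matrix.trace_sub, smul_eq_mul] at h2
    linear_combination h1 - h2
  -- Fp product computations
  have hQQ : ∀ Z : Matrix (Fin N) (Fin N) ℂ, Qᴴ * (Q * Z) = Z := fun Z => by
    rw [← Matrix.mul_assoc, hQ, Matrix.one_mul]
  have hWL : ∀ Z : Matrix (Fin N) (Fin N) ℂ, Wp * (L * Z) = Lp * Z := fun Z => by
    rw [← Matrix.mul_assoc, ← hLp]
  have hLW : ∀ Z : Matrix (Fin N) (Fin N) ℂ, Lᴴ * (Wpᴴ * Z) = Lpᴴ * Z := fun Z => by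
    rw [← Matrix.mul_assoc, ← conjTranspose_mul, ← hLp]
  have hstar : star (((N0:ℂ))⁻¹) = ((N0:ℂ))⁻¹ := by
    simp [Complex.ext_iff]
  have e1 : Fpᴴ * (H * Hᴴ) * Fp = ((((N0:ℂ))⁻¹ * ((N0:ℂ))⁻¹)) • (A * A) := by
    rw [hFp, hH]
    simp only [conjTranspose_smul, conjTranspose_mul, conjTranspose_conjTranspose, hstar,
      Matrix.smul_mul, Matrix.mul_smul, smul_smul, Matrix.mul_assoc, hQQ, hWL, hLW, hA]
  have e2 : Fpᴴ * Fp = ((((N0:ℂ))⁻¹ * ((N0:ℂ))⁻¹)) • (Lpᴴ * (B * Lp)) := by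
    rw [hFp]
    simp only [conjTranspose_smul, conjTranspose_mul, conjTranspose_conjTranspose, hstar,
      Matrix.smul_mul, Matrix.mul_smul, smul_smul, Matrix.mul_assoc, hQQ, hB]
  have hinv1 : (Gp + ((Es:ℂ))⁻¹ • 1)⁻¹ = (Es:ℂ) • S := by
    apply Matrix.inv_eq_right_inv
    rw [hscale, Matrix.smul_mul, Matrix.mul_smul, smul_smul, hPS,
      inv_mul_cancel₀ hEsc, one_smul]
  -- trace of B
  have hBkk : ∀ k, B k k = 1 := by
    intro k
    have h := congrFun (congrFun hWp k) k
    simpa [Matrix.diagonal, Matrix.one_apply] using h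
  have htrB : Matrix.trace B = (N:ℂ) := by
    simp [Matrix.trace, Matrix.diag, hBkk]
  -- trace of the squared term
  have hPA : (β:ℂ) • A = P - 1 := by rw [hP]; abel
  have hPdist : (P - 1) * S = 1 - S := by rw [Matrix.sub_mul, Matrix.one_mul, hPS]
  have hM2 : (β:ℂ)^2 • (A * (A * S)) = P - 1 - 1 + S := by
    calc (β:ℂ)^2 • (A * (A * S)) = ((β:ℂ) • A) * (((β:ℂ) • A) * S) := by
          simp only [Matrix.smul_mul, Matrix.mul_smul, smul_smul, pow_two]
    _ = (P - 1) * ((P - 1) * S) := by rw [hPA]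
    _ = P - 1 - 1 + S := by
          rw [hPdist, Matrix.mul_sub, Matrix.mul_one, hPdist]
          abel
  have tAA : (β:ℂ)^2 * Matrix.trace (A * (A * S)) =
      (β:ℂ) * Matrix.trace A - (N:ℂ) + Matrix.trace S := by
    have h := congrArg Matrix.trace hM2
    simp only [Matrix.trace_smul, Matrix.trace_sub, Matrix.trace_add, Matrix.trace_one,
      smul_eq_mul, hP, Fintype.card_fin] at h
    linear_combination h
  -- trace of the B term
  have hTiC : (β:ℂ) • (Ti * C) = 1 - Ti := by rw [← hCT]; exact hCTi
  have step : Matrix.trace (Lpᴴ * (B * (Lp * S))) = Matrix.trace (B * (Ti * C)) := by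
    rw [hpush, Matrix.trace_mul_comm]
    simp only [Matrix.mul_assoc, ← hC]
  have tB2 : (β:ℂ) * Matrix.trace (Lpᴴ * (B * (Lp * S))) =
      (N:ℂ) - Matrix.trace (B * Ti) := by
    have h : Matrix.trace (B * ((β:ℂ) • (Ti * C))) = (β:ℂ) * Matrix.trace (B * (Ti * C)) := by
      rw [Matrix.mul_smul, Matrix.trace_smul, smul_eq_mul]
    rw [step, ← h, hTiC, Matrix.mul_sub, Matrix.mul_one, Matrix.trace_sub, htrB]
  -- the key trace identity
  have hβ'' : (Es:ℂ) * ((N0:ℂ))⁻¹ = (β:ℂ) := by rw [hβc, div_eq_mul_inv]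
  have comb1 : ((Es:ℂ) • (((((N0:ℂ))⁻¹ * ((N0:ℂ))⁻¹)) • (A * A))) * ((Es:ℂ) • S)
      = (β:ℂ)^2 • (A * (A * S)) := by
    have hs : (Es:ℂ) * ((Es:ℂ) * (((N0:ℂ))⁻¹ * ((N0:ℂ))⁻¹)) = (β:ℂ)^2 := by
      rw [hβc]; field_simp
    simp only [Matrix.smul_mul, Matrix.mul_smul, smul_smul, Matrix.mul_assoc, hs]
  have comb2 : ((N0:ℂ) • (((((N0:ℂ))⁻¹ * ((N0:ℂ))⁻¹)) • (Lpᴴ * (B * Lp)))) * ((Es:ℂ) • S)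
      = (β:ℂ) • (Lpᴴ * (B * (Lp * S))) := by
    have hs : (Es:ℂ) * ((N0:ℂ) * (((N0:ℂ))⁻¹ * ((N0:ℂ))⁻¹)) = (β:ℂ) := by
      rw [hβc]; field_simp
    simp only [Matrix.smul_mul, Matrix.mul_smul, smul_smul, Matrix.mul_assoc, hs]
  have hsplit : Fpᴴ * ((Es:ℂ) • (H * Hᴴ) + (N0:ℂ) • 1) * Fp
      = (Es:ℂ) • (Fpᴴ * (H * Hᴴ) * Fp) + (N0:ℂ) • (Fpᴴ * Fp) := by
    simp only [Matrix.mul_add, Matrix.add_mul, Matrix.mul_smul, Matrix.smul_mul,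
      Matrix.mul_one]
  have key : Matrix.trace (Fpᴴ * ((Es:ℂ) • (H * Hᴴ) + (N0:ℂ) • 1) * Fp *
        (Gp + ((Es:ℂ))⁻¹ • 1)⁻¹)
      = (Es:ℂ) * Matrix.trace Gp + Matrix.trace ((1 - B) * Ti) := by
    rw [hinv1, hsplit, e1, e2, Matrix.add_mul, comb1, comb2, Matrix.trace_add,
      Matrix.trace_smul, Matrix.trace_smul, smul_eq_mul, smul_eq_mul, tAA, tB2, htrS,
      hGp, Matrix.trace_smul, smul_eq_mul, Matrix.sub_mul, Matrix.one_mul, Matrix.trace_sub]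
    linear_combination (-(Matrix.trace A)) * hβ''
  -- determinant relations and final assembly
  obtain ⟨hPre, hPim⟩ := detsplit hPpd
  obtain ⟨hRre, hRim⟩ := detsplit hRpd
  obtain ⟨h1re, h1im⟩ := detsplit h1pd
  have detGoal : (Gp + ((Es:ℂ))⁻¹ • 1).det = ((Es:ℂ))⁻¹ ^ N * P.det := by
    rw [hscale, Matrix.det_smul, Fintype.card_fin]
  have det1re : (Gp + ((Es:ℂ))⁻¹ • 1).det.re = (Es⁻¹)^N * P.det.re := by
    rw [detGoal, show ((Es:ℂ))⁻¹ ^ N = (((Es⁻¹ ^ N : ℝ)):ℂ) by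
      rw [← Complex.ofReal_inv, ← Complex.ofReal_pow], Complex.re_ofReal_mul]
  have logdet : Real.log ((Gp + ((Es:ℂ))⁻¹ • 1).det.re)
      = -((N:ℝ) * Real.log Es) + Real.log P.det.re := by
    rw [det1re, Real.log_mul (pow_ne_zero _ (inv_ne_zero hEs.ne')) hPre.ne',
      Real.log_pow, Real.log_inv]
    push_cast; ring
  have keyre : (Matrix.trace (Fpᴴ * ((Es:ℂ) • (H * Hᴴ) + (N0:ℂ) • 1) * Fp *
        (Gp + ((Es:ℂ))⁻¹ • 1)⁻¹)).re
      = Es * (Matrix.trace Gp).re + (Matrix.trace ((1 - B) * Ti)).re := by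
    rw [key]
    simp [Complex.add_re, Complex.mul_re]
  refine ⟨⟨h1pd, h1re, h1im⟩, ⟨hPpd, hPre, hPim⟩, ⟨hRpd, hRre, hRim⟩, ?_⟩
  rw [keyre]
  linarith [logdet]
end

section
/- Let M, N ≥ 1 and Es, N0 > 0 be reals. Let H ∈ ℂ^{M×N}, let H_a ∈ ℂ^{(M+N)×N} be the augmented channel, and for y ∈ ℂ^M let y_a ∈ ℂ^{M+N} be obtained by stacking (1/√N0)·y on top of the zero vector 0_N. Suppose H_a = Q_a·L_a with Q_a ∈ ℂ^{(M+N)×N}, Q_aᴴQ_a = I_N, and L_a ∈ ℂ^{N×N} invertible, and let W = (1/N0)·(L_aᴴL_a)⁻¹·Hᴴ. Then for every x ∈ ℂ^N: −(1/N0)·‖y − H·x‖² = (1/Es)·‖x‖² − ‖L_a·(W·y − x)‖² − ‖(I_{M+N} − Q_a·Q_aᴴ)·y_a‖². -/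
open Matrix BigOperators

private lemma enorm_sq' {ι : Type*} [Fintype ι] (v : ι → ℂ) :
    _root_.enorm v ^ 2 = (star v ⬝ᵥ v).re := by
  rw [_root_.enorm, Real.sq_sqrt (by positivity)]
  simp [dotProduct, Complex.mul_re, Complex.sq_norm,
    Complex.normSq_apply]

private lemma dot_sum_elim {ι κ : Type*} [Fintype ι] [Fintype κ]
    (f : ι → ℂ) (g : κ → ℂ) :
    star (Sum.elim f g) ⬝ᵥ Sum.elim f g = star f ⬝ᵥ f + star g ⬝ᵥ g := by
  simp [dotProduct, Fintype.sum_sum_type]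

private lemma dot_smul' {ι : Type*} [Fintype ι] (c : ℂ) (v : ι → ℂ) :
    star (c • v) ⬝ᵥ (c • v) = (star c * c) * (star v ⬝ᵥ v) := by
  simp [dotProduct, Finset.mul_sum]
  ring_nf
  congr 1; funext i; ring

/-- **Augmented metric identity.** With augmented channel
`H_a = [(1/√N₀)H ; (1/√E_s)I]`, augmented observation `y_a = [(1/√N₀)y ; 0]`,
QL decomposition `H_a = Q_a L_a` (`Q_aᴴQ_a = I`, `L_a` invertible), and
`W = (1/N₀)(L_aᴴL_a)⁻¹Hᴴ` (the MMSE filter), one has, for every `x`: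
`−(1/N₀)‖y − Hx‖² = (1/E_s)‖x‖² − ‖L_a(Wy − x)‖² − ‖(I − Q_aQ_aᴴ)y_a‖²`. -/
theorem augmented_metric_identity (M N : ℕ) (hM : 1 ≤ M) (hN : 1 ≤ N)
    (Es N0 : ℝ) (hEs : 0 < Es) (hN0 : 0 < N0)
    (H : Matrix (Fin M) (Fin N) ℂ) (y : Fin M → ℂ)
    (Ha : Matrix (Fin M ⊕ Fin N) (Fin N) ℂ)
    (hHa : Ha = Matrix.fromRows ((((Real.sqrt N0 : ℝ) : ℂ))⁻¹ • H)
      ((((Real.sqrt Es : ℝ) : ℂ))⁻¹ • (1 : Matrix (Fin N) (Fin N) ℂ)))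
    (ya : Fin M ⊕ Fin N → ℂ)
    (hya : ya = Sum.elim ((((Real.sqrt N0 : ℝ) : ℂ))⁻¹ • y) (0 : Fin N → ℂ))
    (Qa : Matrix (Fin M ⊕ Fin N) (Fin N) ℂ) (La : Matrix (Fin N) (Fin N) ℂ)
    (hQa : Qaᴴ * Qa = 1) (hLa : IsUnit La) (hdecomp : Ha = Qa * La)
    (W : Matrix (Fin N) (Fin M) ℂ)
    (hW : W = ((N0 : ℂ))⁻¹ • ((Laᴴ * La)⁻¹ * Hᴴ)) :
    ∀ x : Fin N → ℂ,
      -(1 / N0) * _root_.enorm (y - H.mulVec x) ^ 2 =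
        (1 / Es) * _root_.enorm x ^ 2 - _root_.enorm (La.mulVec (W.mulVec y - x)) ^ 2 -
          _root_.enorm ((1 - Qa * Qaᴴ).mulVec ya) ^ 2 := by
  intro x
  have hNsq : ((Real.sqrt N0 : ℝ) : ℂ)⁻¹ * ((Real.sqrt N0 : ℝ) : ℂ)⁻¹ = ((N0 : ℂ))⁻¹ := by
    rw [← mul_inv]
    norm_cast
    rw [Real.mul_self_sqrt hN0.le]
  have hEsq : ((Real.sqrt Es : ℝ) : ℂ)⁻¹ * ((Real.sqrt Es : ℝ) : ℂ)⁻¹ = ((Es : ℂ))⁻¹ := by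
    rw [← mul_inv]
    norm_cast
    rw [Real.mul_self_sqrt hEs.le]
  have hLad : IsUnit La.det := (Matrix.isUnit_iff_isUnit_det La).mp hLa
  have hLaHd : IsUnit (Laᴴ).det :=
    (Matrix.isUnit_iff_isUnit_det Laᴴ).mp ((Matrix.isUnit_conjTranspose La).mpr hLa)
  -- Qaᴴ in terms of Ha and La
  have hQaH : Qaᴴ = (Laᴴ)⁻¹ * Haᴴ := by
    have h1 : Haᴴ = Laᴴ * Qaᴴ := by rw [hdecomp, Matrix.conjTranspose_mul]
    rw [h1, Matrix.nonsing_inv_mul_cancel_left _ _ hLaHd]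
  have hLaW : La * W = ((N0 : ℂ))⁻¹ • ((Laᴴ)⁻¹ * Hᴴ) := by
    rw [hW, Matrix.mul_smul, Matrix.mul_inv_rev]
    congr 1
    rw [show La * (La⁻¹ * (Laᴴ)⁻¹ * Hᴴ) = (La * La⁻¹) * ((Laᴴ)⁻¹ * Hᴴ) by
      rw [Matrix.mul_assoc La La⁻¹, ← Matrix.mul_assoc La⁻¹]]
    rw [Matrix.mul_nonsing_inv _ hLad, Matrix.one_mul]
  -- the key filter identity : La (W y) = Qaᴴ ya
  have hkey : La.mulVec (W.mulVec y) = Qaᴴ.mulVec ya := by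
    rw [Matrix.mulVec_mulVec, hLaW, hQaH, hya, hHa,
      Matrix.conjTranspose_fromRows_eq_fromCols_conjTranspose,
      ← Matrix.mulVec_mulVec, Matrix.fromCols_mulVec_sumElim]
    simp only [Matrix.mulVec_zero, add_zero, Matrix.conjTranspose_smul,
      Matrix.smul_mulVec, Matrix.mulVec_smul, smul_smul, Complex.star_def,
      map_inv₀, Complex.conj_ofReal, ← Matrix.mulVec_mulVec]
    rw [show ((Real.sqrt N0 : ℝ) : ℂ)⁻¹ * ((Real.sqrt N0 : ℝ) : ℂ)⁻¹ = ((N0:ℝ) : ℂ)⁻¹ from hNsq]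
  set v : Fin N → ℂ := La.mulVec (W.mulVec y - x) with hv
  set b : (Fin M ⊕ Fin N) → ℂ := (1 - Qa * Qaᴴ).mulVec ya with hb
  have hsplit : ya - Ha.mulVec x = Qa.mulVec v + b := by
    rw [hv, hb, Matrix.mulVec_sub, Matrix.mulVec_sub, hkey, Matrix.mulVec_mulVec,
      Matrix.mulVec_mulVec, ← hdecomp, Matrix.sub_mulVec, Matrix.one_mulVec,
      ← Matrix.mulVec_mulVec]
    abel
  have hQP : Qaᴴ * (1 - Qa * Qaᴴ) = 0 := by
    rw [Matrix.mul_sub, Matrix.mul_one, ← Matrix.mul_assoc, hQa, Matrix.one_mul, sub_self]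
  have hPQ : (1 - Qa * Qaᴴ) * Qa = 0 := by
    rw [Matrix.sub_mul, Matrix.one_mul, Matrix.mul_assoc, hQa, Matrix.mul_one, sub_self]
  have hPH : (1 - Qa * Qaᴴ)ᴴ = 1 - Qa * Qaᴴ := by
    simp [Matrix.conjTranspose_sub, Matrix.conjTranspose_mul]
  have hc1 : star (Qa.mulVec v) ⬝ᵥ b = 0 := by
    rw [hb, Matrix.star_mulVec, Matrix.dotProduct_mulVec, Matrix.vecMul_vecMul, hQP]
    simp
  have hc2 : star b ⬝ᵥ Qa.mulVec v = 0 := by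
    rw [hb, Matrix.star_mulVec, hPH, Matrix.dotProduct_mulVec, Matrix.vecMul_vecMul, hPQ]
    simp
  have hQnorm : star (Qa.mulVec v) ⬝ᵥ Qa.mulVec v = star v ⬝ᵥ v := by
    rw [Matrix.star_mulVec, Matrix.dotProduct_mulVec, Matrix.vecMul_vecMul, hQa,
      Matrix.vecMul_one]
  have hpyth : star (ya - Ha.mulVec x) ⬝ᵥ (ya - Ha.mulVec x) = star v ⬝ᵥ v + star b ⬝ᵥ b := by
    rw [hsplit, star_add, add_dotProduct, dotProduct_add,
      dotProduct_add, hc1, hc2, hQnorm]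
    ring
  have hu : ya - Ha.mulVec x =
      Sum.elim ((((Real.sqrt N0 : ℝ) : ℂ))⁻¹ • (y - H.mulVec x))
        ((-(((Real.sqrt Es : ℝ) : ℂ))⁻¹) • x) := by
    rw [hya, hHa, Matrix.fromRows_mulVec]
    funext i
    rcases i with i | i <;>
      simp [Matrix.smul_mulVec, smul_sub, Matrix.one_mulVec, neg_smul, mul_sub]
  have hsum : star (ya - Ha.mulVec x) ⬝ᵥ (ya - Ha.mulVec x)
      = ((N0 : ℝ) : ℂ)⁻¹ * (star (y - H.mulVec x) ⬝ᵥ (y - H.mulVec x))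
        + ((Es : ℝ) : ℂ)⁻¹ * (star x ⬝ᵥ x) := by
    rw [hu, dot_sum_elim, dot_smul', dot_smul']
    simp only [star_neg, Complex.star_def, map_inv₀, Complex.conj_ofReal, neg_mul_neg]
    rw [hNsq, hEsq]
  have hC : ((N0 : ℝ) : ℂ)⁻¹ * (star (y - H.mulVec x) ⬝ᵥ (y - H.mulVec x))
      = star v ⬝ᵥ v + star b ⬝ᵥ b - ((Es : ℝ) : ℂ)⁻¹ * (star x ⬝ᵥ x) := by
    rw [← hpyth, hsum]; ring
  have hR := congrArg Complex.re hC
  simp only [Complex.sub_re, Complex.add_re, ← Complex.ofReal_inv,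
    Complex.re_ofReal_mul] at hR
  rw [enorm_sq', enorm_sq', enorm_sq', enorm_sq', one_div, one_div]
  linarith [hR]
end

section
/- Let M, N ≥ 1, let Es, N0 > 0 be reals with β = Es/N0, and let H ∈ ℂ^{M×N}. Let H_a ∈ ℂ^{(M+N)×N} be the augmented channel, and suppose H_a = Q_a·L_a with Q_a ∈ ℂ^{(M+N)×N}, Q_aᴴQ_a = I_N, and L_a ∈ ℂ^{N×N} invertible. Write Q_a in blocks as Q_{a1} (the top M×N block) stacked on Q_{a2} (the bottom N×N block). Then: (i) Q_{a2} = (1/√Es)·L_a⁻¹; and (ii) the MMSE filter W = (HᴴH + (N0/Es)·I_N)⁻¹·Hᴴ satisfies W = √β·Q_{a2}·Q_{a1}ᴴ. -/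
open Matrix BigOperators

/-- **MMSE filter from the QL decomposition of the augmented channel.**
With `H_a = [(1/√N₀)H ; (1/√E_s)I] = Q_a L_a` (`Q_aᴴQ_a = I`, `L_a` invertible), writing
`Q_{a1}`, `Q_{a2}` for the top `M×N` and bottom `N×N` blocks of `Q_a`:
(i) `Q_{a2} = (1/√E_s) L_a⁻¹`, and (ii) the MMSE filter
`W = (HᴴH + (N₀/E_s)I)⁻¹Hᴴ` equals `√β · Q_{a2} Q_{a1}ᴴ` with `β = E_s/N₀`. -/
theorem mmse_from_augmented_QL (M N : ℕ) (hM : 1 ≤ M) (hN : 1 ≤ N)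
    (Es N0 β : ℝ) (hEs : 0 < Es) (hN0 : 0 < N0) (hβ : β = Es / N0)
    (H : Matrix (Fin M) (Fin N) ℂ)
    (Ha : Matrix (Fin M ⊕ Fin N) (Fin N) ℂ)
    (hHa : Ha = Matrix.fromRows ((((Real.sqrt N0 : ℝ) : ℂ))⁻¹ • H)
      ((((Real.sqrt Es : ℝ) : ℂ))⁻¹ • (1 : Matrix (Fin N) (Fin N) ℂ)))
    (Qa : Matrix (Fin M ⊕ Fin N) (Fin N) ℂ) (La : Matrix (Fin N) (Fin N) ℂ)
    (hQa : Qaᴴ * Qa = 1) (hLa : IsUnit La) (hdecomp : Ha = Qa * La) :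
    Qa.submatrix Sum.inr id = (((Real.sqrt Es : ℝ) : ℂ))⁻¹ • La⁻¹ ∧
    (Hᴴ * H + (((N0 / Es : ℝ)) : ℂ) • 1)⁻¹ * Hᴴ =
      (((Real.sqrt β : ℝ) : ℂ)) • (Qa.submatrix Sum.inr id * (Qa.submatrix Sum.inl id)ᴴ) := by
  set sEs : ℂ := ((Real.sqrt Es : ℝ) : ℂ) with hsEs
  set sN0 : ℂ := ((Real.sqrt N0 : ℝ) : ℂ) with hsN0
  set Q1 := Qa.submatrix Sum.inl (id : Fin N → Fin N) with hQ1
  set Q2 := Qa.submatrix Sum.inr (id : Fin N → Fin N) with hQ2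
  have hsEs0 : sEs ≠ 0 := by
    simpa [hsEs] using Complex.ofReal_ne_zero.mpr (Real.sqrt_pos.mpr hEs).ne'
  have hsN00 : sN0 ≠ 0 := by
    simpa [hsN0] using Complex.ofReal_ne_zero.mpr (Real.sqrt_pos.mpr hN0).ne'
  have hdet : IsUnit La.det := (Matrix.isUnit_iff_isUnit_det La).mp hLa
  rw [hHa] at hdecomp
  -- block equations
  have h1 : sN0⁻¹ • H = Q1 * La := by
    ext i j
    have := congrFun (congrFun hdecomp (Sum.inl i)) j
    simpa [Matrix.mul_apply, Matrix.fromRows_apply_inl, hQ1] using this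
  have h2 : sEs⁻¹ • (1 : Matrix (Fin N) (Fin N) ℂ) = Q2 * La := by
    ext i j
    have := congrFun (congrFun hdecomp (Sum.inr i)) j
    simpa [Matrix.mul_apply, Matrix.fromRows_apply_inr, hQ2] using this
  -- part (i)
  have hpart1 : Q2 = sEs⁻¹ • La⁻¹ := by
    calc Q2 = Q2 * (La * La⁻¹) := by rw [Matrix.mul_nonsing_inv La hdet, Matrix.mul_one]
    _ = (Q2 * La) * La⁻¹ := by rw [Matrix.mul_assoc]
    _ = (sEs⁻¹ • (1 : Matrix (Fin N) (Fin N) ℂ)) * La⁻¹ := by rw [h2]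
    _ = sEs⁻¹ • La⁻¹ := by rw [Matrix.smul_mul, Matrix.one_mul]
  refine ⟨hpart1, ?_⟩
  -- orthogonality split
  have hsum : Q1ᴴ * Q1 + Q2ᴴ * Q2 = 1 := by
    rw [← hQa]
    ext j k
    simp [Matrix.mul_apply, Fintype.sum_sum_type, hQ1, hQ2, Matrix.conjTranspose_apply]
  -- star facts
  have hstarEs : star sEs = sEs := by simp [hsEs, Complex.star_def, Complex.conj_ofReal]
  have hstarN0 : star sN0 = sN0 := by simp [hsN0, Complex.star_def, Complex.conj_ofReal]
  have hsq_N0 : sN0 * sN0 = (N0 : ℂ) := by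
    rw [hsN0, ← Complex.ofReal_mul, Real.mul_self_sqrt hN0.le]
  have hsq_Es : sEs * sEs = (Es : ℂ) := by
    rw [hsEs, ← Complex.ofReal_mul, Real.mul_self_sqrt hEs.le]
  -- Gram identity
  have hGram : Laᴴ * La = (N0 : ℂ)⁻¹ • (Hᴴ * H) + (Es : ℂ)⁻¹ • 1 := by
    have key : Laᴴ * (Q1ᴴ * Q1 + Q2ᴴ * Q2) * La = Laᴴ * La := by
      rw [hsum, Matrix.mul_one]
    calc Laᴴ * La = Laᴴ * (Q1ᴴ * Q1 + Q2ᴴ * Q2) * La := key.symm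
    _ = (Q1 * La)ᴴ * (Q1 * La) + (Q2 * La)ᴴ * (Q2 * La) := by
        simp only [Matrix.conjTranspose_mul, Matrix.mul_add, Matrix.add_mul, Matrix.mul_assoc]
    _ = (sN0⁻¹ • H)ᴴ * (sN0⁻¹ • H) + (sEs⁻¹ • (1:Matrix (Fin N) (Fin N) ℂ))ᴴ * (sEs⁻¹ • 1) := by
        rw [h1, h2]
    _ = (N0 : ℂ)⁻¹ • (Hᴴ * H) + (Es : ℂ)⁻¹ • 1 := by
        rw [Matrix.conjTranspose_smul, Matrix.conjTranspose_smul, Matrix.conjTranspose_one,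
          Matrix.smul_mul, Matrix.mul_smul, Matrix.smul_mul, Matrix.mul_smul, Matrix.one_mul,
          smul_smul, smul_smul, star_inv₀, star_inv₀, hstarEs, hstarN0,
          ← mul_inv, ← mul_inv, hsq_N0, hsq_Es]
  -- A = N0 • Laᴴ La
  set A : Matrix (Fin N) (Fin N) ℂ := Hᴴ * H + (((N0 / Es : ℝ)) : ℂ) • 1 with hAdef
  have hN0c : (N0 : ℂ) ≠ 0 := by exact_mod_cast hN0.ne'
  have hEsc : (Es : ℂ) ≠ 0 := by exact_mod_cast hEs.ne'
  have hA : A = (N0 : ℂ) • (Laᴴ * La) := by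
    rw [hAdef, hGram, smul_add, smul_smul, smul_smul, mul_inv_cancel₀ hN0c, one_smul]
    congr 1
    rw [Complex.ofReal_div]
    ring_nf
  -- inverse of A
  have hdetH : IsUnit Laᴴ.det := by
    rw [Matrix.det_conjTranspose]
    exact hdet.star
  have hAinv : A⁻¹ = (N0 : ℂ)⁻¹ • (La⁻¹ * Laᴴ⁻¹) := by
    apply Matrix.inv_eq_right_inv
    rw [hA, Matrix.smul_mul, Matrix.mul_smul, smul_smul, mul_inv_cancel₀ hN0c, one_smul,
      Matrix.mul_assoc, ← Matrix.mul_assoc La, Matrix.mul_nonsing_inv La hdet,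
      Matrix.one_mul, Matrix.mul_nonsing_inv Laᴴ hdetH]
  -- Hᴴ in terms of La, Q1
  have hH : H = sN0 • (Q1 * La) := by
    rw [← h1, smul_smul, mul_inv_cancel₀ hsN00, one_smul]
  have hHH : Hᴴ = sN0 • (Laᴴ * Q1ᴴ) := by
    rw [hH, Matrix.conjTranspose_smul, hstarN0, Matrix.conjTranspose_mul]
  -- La⁻¹ = sEs • Q2
  have hLainv : La⁻¹ = sEs • Q2 := by
    rw [hpart1, smul_smul, mul_inv_cancel₀ hsEs0, one_smul]
  -- scalar identity
  have hscal : (N0 : ℂ)⁻¹ * sN0 * sEs = ((Real.sqrt β : ℝ) : ℂ) := by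
    have hrs : Real.sqrt β = Real.sqrt Es / Real.sqrt N0 := by
      rw [hβ, Real.sqrt_div hEs.le]
    rw [hrs, Complex.ofReal_div, ← hsEs, ← hsN0, eq_div_iff hsN00]
    field_simp [hN0c]
    linear_combination hsq_N0
  rw [hAinv, hHH]
  rw [Matrix.smul_mul, Matrix.mul_smul, smul_smul, Matrix.mul_assoc,
    ← Matrix.mul_assoc Laᴴ⁻¹, Matrix.nonsing_inv_mul Laᴴ hdetH, Matrix.one_mul,
    hLainv, Matrix.smul_mul, smul_smul, hscal]
end

section
/- Let H ∈ ℂ^{M×N}, let Es, N0 > 0 be reals, set α = N0/Es, and let W = (HᴴH + α·I_N)⁻¹·Hᴴ be the MMSE filter. Let B = (1/N0)·HᴴH + (1/Es)·I_N (the Gram matrix H_aᴴH_a of the augmented channel). Then B is positive definite, hence invertible, and Es·(I_N − W·H) = B⁻¹. -/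
open Matrix BigOperators
open scoped ComplexOrder

private lemma smul_posDef {n : ℕ} {A : Matrix (Fin n) (Fin n) ℂ} {c : ℝ} (hc : 0 < c)
    (hA : A.PosDef) : ((c : ℂ) • A).PosDef := by
  rw [Matrix.posDef_iff_dotProduct_mulVec] at hA ⊢
  refine ⟨?_, fun x hx => ?_⟩
  · unfold Matrix.IsHermitian
    rw [conjTranspose_smul, hA.1.eq]
    norm_num
  · have hp := hA.2 hx
    rw [smul_mulVec, dotProduct_smul]
    rw [Complex.lt_def] at hp ⊢
    constructor
    · simpa [← hp.2] using mul_pos hc hp.1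
    · simp [← hp.2]

private lemma smul_posSemidef {n : ℕ} {A : Matrix (Fin n) (Fin n) ℂ} {c : ℝ} (hc : 0 ≤ c)
    (hA : A.PosSemidef) : ((c : ℂ) • A).PosSemidef := by
  rw [Matrix.posSemidef_iff_dotProduct_mulVec] at hA ⊢
  refine ⟨?_, fun x => ?_⟩
  · unfold Matrix.IsHermitian
    rw [conjTranspose_smul, hA.1.eq]
    norm_num
  · have hp := hA.2 x
    rw [smul_mulVec, dotProduct_smul]
    rw [Complex.le_def] at hp ⊢
    constructor
    · simpa [← hp.2] using mul_nonneg hc hp.1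
    · simp [← hp.2]

/-- With `α = N₀/E_s`, MMSE filter `W = (HᴴH + αI)⁻¹Hᴴ`, and
`B = (1/N₀)HᴴH + (1/E_s)I` (the Gram matrix of the augmented channel), `B` is positive
definite (hence invertible) and `E_s(I − WH) = B⁻¹`. -/
theorem mmse_gram_inverse (M N : ℕ) (H : Matrix (Fin M) (Fin N) ℂ)
    (Es N0 : ℝ) (hEs : 0 < Es) (hN0 : 0 < N0) :
    (((N0 : ℂ))⁻¹ • (Hᴴ * H) + ((Es : ℂ))⁻¹ • 1).PosDef ∧
    IsUnit (((N0 : ℂ))⁻¹ • (Hᴴ * H) + ((Es : ℂ))⁻¹ • 1) ∧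
    (Es : ℂ) • ((1 : Matrix (Fin N) (Fin N) ℂ) -
        ((Hᴴ * H + (((N0 / Es : ℝ)) : ℂ) • 1)⁻¹ * Hᴴ) * H) =
      (((N0 : ℂ))⁻¹ • (Hᴴ * H) + ((Es : ℂ))⁻¹ • 1)⁻¹ := by
  set A := Hᴴ * H + (((N0 / Es : ℝ)) : ℂ) • 1 with hAdef
  set B := ((N0 : ℂ))⁻¹ • (Hᴴ * H) + ((Es : ℂ))⁻¹ • 1 with hBdef
  have hone : ((Es : ℂ))⁻¹ • (1 : Matrix (Fin N) (Fin N) ℂ)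
      = ((Es⁻¹ : ℝ) : ℂ) • 1 := by push_cast; ring_nf
  have hsm : ((N0 : ℂ))⁻¹ • (Hᴴ * H) = ((N0⁻¹ : ℝ) : ℂ) • (Hᴴ * H) := by push_cast; ring_nf
  have hB : B.PosDef := by
    rw [hBdef, hone, hsm]
    exact Matrix.PosDef.posSemidef_add
      (smul_posSemidef (le_of_lt (inv_pos.2 hN0)) (Matrix.posSemidef_conjTranspose_mul_self H))
      (smul_posDef (inv_pos.2 hEs) Matrix.PosDef.one)
  have hA : A.PosDef := by
    rw [hAdef]
    exact Matrix.PosDef.posSemidef_add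
      (Matrix.posSemidef_conjTranspose_mul_self H)
      (smul_posDef (div_pos hN0 hEs) Matrix.PosDef.one)
  refine ⟨hB, hB.isUnit, ?_⟩
  have hAinv : A⁻¹ * A = 1 := Matrix.nonsing_inv_mul _ (Matrix.isUnit_iff_isUnit_det _ |>.1 hA.isUnit)
  have key : (Es : ℂ) • ((1 : Matrix (Fin N) (Fin N) ℂ) - (A⁻¹ * Hᴴ) * H)
      = (N0 : ℂ) • A⁻¹ := by
    have h1 : (1 : Matrix (Fin N) (Fin N) ℂ) - (A⁻¹ * Hᴴ) * H
        = A⁻¹ * (A - Hᴴ * H) := by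
      rw [Matrix.mul_sub, hAinv, Matrix.mul_assoc]
    rw [h1, hAdef, add_sub_cancel_left, Matrix.mul_smul, Matrix.mul_one, smul_smul]
    congr 1
    push_cast
    field_simp
  rw [key]
  symm
  apply Matrix.inv_eq_right_inv
  rw [hBdef, Matrix.add_mul, Matrix.smul_mul, Matrix.smul_mul, Matrix.mul_smul, Matrix.mul_smul,
    Matrix.one_mul, smul_smul, smul_smul]
  have hEs' : (Es : ℂ) ≠ 0 := by exact_mod_cast hEs.ne'
  have hN0' : (N0 : ℂ) ≠ 0 := by exact_mod_cast hN0.ne'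
  have hAmul : A * A⁻¹ = 1 := Matrix.mul_nonsing_inv _ (Matrix.isUnit_iff_isUnit_det _ |>.1 hA.isUnit)
  calc ((N0:ℂ)⁻¹ * N0) • (Hᴴ * H * A⁻¹) + ((Es:ℂ)⁻¹ * N0) • A⁻¹
      = Hᴴ * H * A⁻¹ + (((N0/Es : ℝ)):ℂ) • A⁻¹ := by
        rw [inv_mul_cancel₀ hN0', one_smul]; congr 2; push_cast; ring
    _ = (Hᴴ * H + (((N0/Es : ℝ)):ℂ) • 1) * A⁻¹ := by
        rw [Matrix.add_mul, Matrix.smul_mul, Matrix.one_mul]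
    _ = 1 := hAmul
end

section
/- Let M, N ≥ 1, let Es, N0 > 0 be reals, set α = N0/Es, let H ∈ ℂ^{M×N}, and let W = (HᴴH + α·I_N)⁻¹·Hᴴ be the MMSE filter. Let L_a ∈ ℂ^{N×N} be invertible with L_aᴴL_a = (1/N0)·HᴴH + (1/Es)·I_N. Let W_ap ∈ ℂ^{N×N} be invertible with diag(W_ap·W_apᴴ) = I_N, and set L_ap = W_ap·L_a, G_ap = L_apᴴ·L_ap, and F_ap = Wᴴ·G_ap. Then G_ap is a positive-definite Hermitian matrix with positive real determinant, and the following identity holds: N − Es·Re Tr(G_ap) + 2·Es·Re Tr(F_apᴴ·H) + N·ln(Es) + ln det(G_ap) − Re Tr( F_apᴴ·(Es·H·Hᴴ + N0·I_M)·F_ap·G_ap⁻¹ ) = N·ln(Es) + ln det(L_apᴴ·L_ap). (This common value is the lower bound I_LB^AWLD on the achievable information rate of the AWLD detector with Gaussian inputs established in Theorem 2.) -/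
open Matrix BigOperators
open scoped ComplexOrder

/-- **Theorem 2 (AIR lower bound of the AWLD detector, Gaussian inputs).**
With `α = N₀/E_s`, MMSE filter `W = (HᴴH + αI)⁻¹Hᴴ`, `L_a` invertible with
`L_aᴴL_a = (1/N₀)HᴴH + (1/E_s)I`, `W_ap` invertible with unit-norm rows
(`diag(W_ap W_apᴴ) = I`), `L_ap = W_ap L_a`, `G_ap = L_apᴴ L_ap`, and `F_ap = Wᴴ G_ap`:
`G_ap` is positive definite Hermitian with positive real determinant, and
`N − E_s Re Tr G_ap + 2E_s Re Tr(F_apᴴH) + N ln E_s + ln det G_ap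
  − Re Tr(F_apᴴ(E_s HHᴴ + N₀ I)F_ap G_ap⁻¹) = N ln E_s + ln det(L_apᴴ L_ap)`. -/
theorem ILB_AWLD (M N : ℕ) (hM : 1 ≤ M) (hN : 1 ≤ N)
    (Es N0 α : ℝ) (hEs : 0 < Es) (hN0 : 0 < N0) (hα : α = N0 / Es)
    (H : Matrix (Fin M) (Fin N) ℂ)
    (W : Matrix (Fin N) (Fin M) ℂ) (hW : W = (Hᴴ * H + (α : ℂ) • 1)⁻¹ * Hᴴ)
    (La : Matrix (Fin N) (Fin N) ℂ) (hLa : IsUnit La)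
    (hGram : Laᴴ * La = ((N0 : ℂ))⁻¹ • (Hᴴ * H) + ((Es : ℂ))⁻¹ • 1)
    (Wap : Matrix (Fin N) (Fin N) ℂ) (hWap : IsUnit Wap)
    (hWapRows : Matrix.diagonal (fun k => (Wap * Wapᴴ) k k) = (1 : Matrix (Fin N) (Fin N) ℂ))
    (Lap : Matrix (Fin N) (Fin N) ℂ) (hLap : Lap = Wap * La)
    (Gap : Matrix (Fin N) (Fin N) ℂ) (hGap : Gap = Lapᴴ * Lap)
    (Fap : Matrix (Fin M) (Fin N) ℂ) (hFap : Fap = Wᴴ * Gap) :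
    (Gap.PosDef ∧ 0 < Gap.det.re ∧ Gap.det.im = 0) ∧
    (N : ℝ) - Es * (Matrix.trace Gap).re + 2 * Es * (Matrix.trace (Fapᴴ * H)).re +
        (N : ℝ) * Real.log Es + Real.log Gap.det.re -
        (Matrix.trace (Fapᴴ * ((Es : ℂ) • (H * Hᴴ) + (N0 : ℂ) • 1) * Fap * Gap⁻¹)).re =
      (N : ℝ) * Real.log Es + Real.log (Lapᴴ * Lap).det.re := by
  classical
  have hEsc : (Es : ℂ) ≠ 0 := Complex.ofReal_ne_zero.mpr hEs.ne'
  have hN0c : (N0 : ℂ) ≠ 0 := Complex.ofReal_ne_zero.mpr hN0.ne'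
  have hLapU : IsUnit Lap := hLap ▸ hWap.mul hLa
  -- Positive definiteness of Gap
  have hPD : Gap.PosDef := by
    subst hGap
    refine Matrix.PosDef.of_dotProduct_mulVec_pos (Matrix.isHermitian_conjTranspose_mul_self _) fun x hx => ?_
    rw [← mulVec_mulVec, dotProduct_mulVec, vecMul_conjTranspose, star_star]
    refine Matrix.dotProduct_star_self_pos_iff.mpr fun h0 => hx ?_
    exact Matrix.mulVec_injective_iff_isUnit.mpr hLapU (by simpa using h0)
  have hdetpos : (0 : ℂ) < Gap.det := hPD.det_pos
  rw [Complex.lt_def] at hdetpos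
  refine ⟨⟨hPD, by simpa using hdetpos.1, hdetpos.2.symm⟩, ?_⟩
  -- notation
  set A : Matrix (Fin N) (Fin N) ℂ := Hᴴ * H + (α : ℂ) • 1 with hAdef
  have hEsα : (Es : ℂ) * (α : ℂ) = (N0 : ℂ) := by
    rw [hα]; push_cast; field_simp
  have hA : A = (N0 : ℂ) • (Laᴴ * La) := by
    rw [hAdef, hGram, smul_add, smul_smul, smul_smul, mul_inv_cancel₀ hN0c, one_smul]
    congr 2
    rw [hα]; push_cast; ring
  have hAH : Aᴴ = A := by
    rw [hA, conjTranspose_smul, conjTranspose_mul, conjTranspose_conjTranspose,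
      Complex.star_def, Complex.conj_ofReal]
  have hLaD : IsUnit La.det := (Matrix.isUnit_iff_isUnit_det La).mp hLa
  have hLaGD : IsUnit (Laᴴ * La).det := by
    rw [Matrix.det_mul, Matrix.det_conjTranspose]
    exact hLaD.star.mul hLaD
  have hAdet : IsUnit A.det := by
    rw [hA, Matrix.det_smul]
    exact ((Ne.isUnit hN0c).pow _).mul hLaGD
  have hAiA : A⁻¹ * A = 1 := Matrix.nonsing_inv_mul A hAdet
  have hAAi : A * A⁻¹ = 1 := Matrix.mul_nonsing_inv A hAdet
  have hGapU : IsUnit Gap := hGap ▸ (hLapU.star.mul hLapU)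
  have hGapGi : Gap * Gap⁻¹ = 1 :=
    Matrix.mul_nonsing_inv Gap ((Matrix.isUnit_iff_isUnit_det Gap).mp hGapU)
  have hGapH : Gapᴴ = Gap := by
    rw [hGap, conjTranspose_mul, conjTranspose_conjTranspose]
  have hFapH : Fapᴴ = Gap * W := by
    rw [hFap, conjTranspose_mul, conjTranspose_conjTranspose, hGapH]
  have hWH : W * H = A⁻¹ * (Hᴴ * H) := by rw [hW, Matrix.mul_assoc]
  have hWc : Wᴴ = H * A⁻¹ := by
    rw [hW, conjTranspose_mul, conjTranspose_conjTranspose,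
      Matrix.conjTranspose_nonsing_inv, hAH]
  have h1WH : (1 : Matrix (Fin N) (Fin N) ℂ) - W * H = (α : ℂ) • A⁻¹ := by
    have h2 : A⁻¹ * A = A⁻¹ * (Hᴴ * H) + (α : ℂ) • A⁻¹ := by
      rw [hAdef]
      rw [Matrix.mul_add, Matrix.mul_smul, Matrix.mul_one]
    have h3 : A⁻¹ * (Hᴴ * H) + (α : ℂ) • A⁻¹ = 1 := by rw [← h2, hAiA]
    rw [hWH, ← h3, add_sub_cancel_left]
  -- the key sandwich identity
  have hmid : Hᴴ * ((Es : ℂ) • (H * Hᴴ) + (N0 : ℂ) • 1) * H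
      = (Es : ℂ) • ((Hᴴ * H) * A) := by
    rw [hAdef]
    simp only [Matrix.mul_add, Matrix.add_mul, Matrix.mul_smul, Matrix.smul_mul,
      Matrix.mul_one, smul_smul, hEsα, smul_add, Matrix.mul_assoc]
  have hS : W * ((Es : ℂ) • (H * Hᴴ) + (N0 : ℂ) • 1) * Wᴴ = (Es : ℂ) • (W * H) := by
    rw [hWc, hW]
    calc A⁻¹ * Hᴴ * ((Es : ℂ) • (H * Hᴴ) + (N0 : ℂ) • 1) * (H * A⁻¹)
        = A⁻¹ * (Hᴴ * ((Es : ℂ) • (H * Hᴴ) + (N0 : ℂ) • 1) * H) * A⁻¹ := by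
          simp only [Matrix.mul_assoc]
      _ = (Es : ℂ) • (A⁻¹ * (Hᴴ * H) * (A * A⁻¹)) := by
          rw [hmid, Matrix.mul_smul, Matrix.smul_mul]
          simp only [Matrix.mul_assoc]
      _ = (Es : ℂ) • (A⁻¹ * (Hᴴ * H)) := by rw [hAAi, Matrix.mul_one]
      _ = (Es : ℂ) • ((A⁻¹ * Hᴴ) * H) := by rw [Matrix.mul_assoc]
  -- trace identities
  have t1 : Matrix.trace (Fapᴴ * H) = Matrix.trace (Gap * (W * H)) := by
    rw [hFapH, Matrix.mul_assoc]
  have t2 : Matrix.trace (Fapᴴ * ((Es : ℂ) • (H * Hᴴ) + (N0 : ℂ) • 1) * Fap * Gap⁻¹)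
      = (Es : ℂ) * Matrix.trace (Gap * (W * H)) := by
    have : Fapᴴ * ((Es : ℂ) • (H * Hᴴ) + (N0 : ℂ) • 1) * Fap * Gap⁻¹
        = Gap * ((Es : ℂ) • (W * H)) := by
      rw [hFapH, hFap, ← hS]
      calc Gap * W * ((Es : ℂ) • (H * Hᴴ) + (N0 : ℂ) • 1) * (Wᴴ * Gap) * Gap⁻¹
          = Gap * (W * ((Es : ℂ) • (H * Hᴴ) + (N0 : ℂ) • 1) * Wᴴ) * (Gap * Gap⁻¹) := by
            simp only [Matrix.mul_assoc]
        _ = Gap * (W * ((Es : ℂ) • (H * Hᴴ) + (N0 : ℂ) • 1) * Wᴴ) := by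
            rw [hGapGi, Matrix.mul_one]
    rw [this, Matrix.mul_smul, Matrix.trace_smul, smul_eq_mul]
  have hWapTr : Matrix.trace (Wapᴴ * Wap) = (N : ℂ) := by
    rw [Matrix.trace_mul_comm]
    have : Matrix.trace (Wap * Wapᴴ)
        = Matrix.trace (Matrix.diagonal (fun k => (Wap * Wapᴴ) k k)) := by
      simp [Matrix.trace, Matrix.diag]
    rw [this, hWapRows, Matrix.trace_one]
    simp
  have hLaiLa : La * La⁻¹ = 1 := Matrix.mul_nonsing_inv La hLaD
  have hLaHi : Laᴴ⁻¹ * Laᴴ = 1 := Matrix.nonsing_inv_mul Laᴴ (by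
    rw [Matrix.det_conjTranspose]; exact hLaD.star)
  have hGapAi : Matrix.trace (Gap * A⁻¹) = (N0 : ℂ)⁻¹ * (N : ℂ) := by
    haveI : Invertible (N0 : ℂ) := invertibleOfNonzero hN0c
    have hAi : A⁻¹ = (N0 : ℂ)⁻¹ • (La⁻¹ * Laᴴ⁻¹) := by
      rw [hA, Matrix.inv_smul (A := Laᴴ * La) (↑N0) hLaGD, Matrix.mul_inv_rev, invOf_eq_inv]
    have hGexp : Gap = Laᴴ * (Wapᴴ * Wap) * La := by
      rw [hGap, hLap, conjTranspose_mul]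
      simp only [Matrix.mul_assoc]
    rw [hAi, hGexp, Matrix.mul_smul, Matrix.trace_smul, smul_eq_mul]
    congr 1
    calc Matrix.trace (Laᴴ * (Wapᴴ * Wap) * La * (La⁻¹ * Laᴴ⁻¹))
        = Matrix.trace (Laᴴ * ((Wapᴴ * Wap) * ((La * La⁻¹) * Laᴴ⁻¹))) := by
          simp only [Matrix.mul_assoc]
      _ = Matrix.trace (Laᴴ * ((Wapᴴ * Wap) * Laᴴ⁻¹)) := by
          rw [hLaiLa, Matrix.one_mul]
      _ = Matrix.trace (((Wapᴴ * Wap) * Laᴴ⁻¹) * Laᴴ) := by rw [Matrix.trace_mul_comm]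
      _ = Matrix.trace ((Wapᴴ * Wap) * (Laᴴ⁻¹ * Laᴴ)) := by simp only [Matrix.mul_assoc]
      _ = (N : ℂ) := by rw [hLaHi, Matrix.mul_one, hWapTr]
  have t3 : Matrix.trace Gap - Matrix.trace (Gap * (W * H)) = (((N : ℝ) / Es : ℝ) : ℂ) := by
    have : Matrix.trace Gap - Matrix.trace (Gap * (W * H))
        = Matrix.trace (Gap * ((1 : Matrix (Fin N) (Fin N) ℂ) - W * H)) := by
      rw [Matrix.mul_sub, Matrix.trace_sub, Matrix.mul_one]
    rw [this, h1WH, Matrix.mul_smul, Matrix.trace_smul, smul_eq_mul, hGapAi, hα]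
    push_cast
    field_simp
  -- finish
  rw [← hGap, t1, t2]
  have hre3 : (Matrix.trace Gap).re - (Matrix.trace (Gap * (W * H))).re = (N : ℝ) / Es := by
    have := congrArg Complex.re t3
    simpa [Complex.sub_re] using this
  rw [Complex.re_ofReal_mul]
  have hx : Es * ((Matrix.trace Gap).re - (Matrix.trace (Gap * (W * H))).re) = (N : ℝ) := by
    rw [hre3]; field_simp
  rw [mul_sub] at hx
  linarith [hx]
end

section
/- Let M, N ≥ 2, 1 ≤ ν ≤ N−1, let Es, N0 > 0 be reals with β = Es/N0, and let H ∈ ℂ^{M×N}. Let L_a ∈ ℂ^{N×N} be lower-triangular with real positive diagonal entries satisfying L_aᴴL_a = (1/N0)·HᴴH + (1/Es)·I_N, partitioned as L_a = [[P_a, 0],[R_a, S_a]] with P_a of size ν×ν and S_a = [s_{kj}] of size (N−ν)×(N−ν). Let L_ap = [[P_a, 0],[Ω(S_a)·S_a⁻¹·R_a, Ω(S_a)]]. Then I_N + β·HᴴH and L_apᴴ·L_ap are positive-definite Hermitian matrices with positive real determinants, and ln det(I_N + β·HᴴH) − ( N·ln(Es) + ln det(L_apᴴ·L_ap) ) = Σ_{k=1}^{N−ν}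 ln( s_{kk}² · Σ_{j<k} |(S_a⁻¹)_{kj}|² + 1 ). -/
open Matrix BigOperators
open scoped ComplexOrder

lemma myPosDef {n : Type*} [Fintype n] [DecidableEq n]
    (A : Matrix n n ℂ) (hA : IsUnit A.det) : (Aᴴ * A).PosDef := by
  refine Matrix.posDef_iff_dotProduct_mulVec.2 ⟨Matrix.isHermitian_conjTranspose_mul_self A, fun x hx => ?_⟩
  have h1 : dotProduct (star x) ((Aᴴ * A) *ᵥ x) = dotProduct (star (A *ᵥ x)) (A *ᵥ x) := by
    rw [← mulVec_mulVec, dotProduct_mulVec, vecMul_conjTranspose, star_star]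
  have hAx : A *ᵥ x ≠ 0 := by
    intro h
    apply hx
    have hinj := Matrix.mulVec_injective_iff_isUnit.2 ((Matrix.isUnit_iff_isUnit_det A).2 hA)
    have : A *ᵥ x = A *ᵥ 0 := by simpa [Matrix.mulVec_zero] using h
    exact hinj this
  rw [h1]
  refine lt_of_le_of_ne ?_ (Ne.symm fun h => hAx (dotProduct_star_self_eq_zero.1 h))
  exact Finset.sum_nonneg fun i _ => star_mul_self_nonneg _

lemma myLowerDet {n : ℕ} (S : Matrix (Fin n) (Fin n) ℂ)
    (hS : ∀ i j, i < j → S i j = 0) : S.det = ∏ i, S i i :=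
  Matrix.det_of_lowerTriangular S (fun i j h => hS i j h)

lemma myInvTri {n : ℕ} (S : Matrix (Fin n) (Fin n) ℂ)
    (hS : ∀ i j, i < j → S i j = 0) (hdet : IsUnit S.det) :
    (∀ i j, i < j → S⁻¹ i j = 0) ∧ ∀ k, S⁻¹ k k = (S k k)⁻¹ := by
  haveI := S.invertibleOfIsUnitDet hdet
  have hBT : S.BlockTriangular OrderDual.toDual := fun i j h => hS i j h
  have hinv := Matrix.blockTriangular_inv_of_blockTriangular hBT
  refine ⟨fun i j h => hinv h, fun k => ?_⟩
  have h1 : (S⁻¹ * S) k k = 1 := by rw [Matrix.nonsing_inv_mul S hdet]; simp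
  rw [Matrix.mul_apply] at h1
  have h2 : ∑ j, S⁻¹ k j * S j k = S⁻¹ k k * S k k := by
    refine Finset.sum_eq_single k (fun j _ hj => ?_) (by simp)
    rcases lt_or_gt_of_ne hj with h | h
    · rw [hS j k h, mul_zero]
    · rw [hinv h, zero_mul]
  exact eq_inv_of_mul_eq_one_left (by rw [← h2, h1])

/-- **Gap to AWGN capacity of the AWLD detector.** With `N = ν + m` (`ν, m ≥ 1`, `M ≥ 2`),
`β = E_s/N₀`, `L_a = [[P_a,0],[R_a,S_a]]` lower-triangular with real positive diagonal
satisfying `L_aᴴL_a = (1/N₀)HᴴH + (1/E_s)I`, and punctured matrix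
`L_ap = [[P_a,0],[Ω(S_a)S_a⁻¹R_a, Ω(S_a)]]`: both `I + βHᴴH` and `L_apᴴL_ap` are positive
definite Hermitian with positive real determinants, and
`ln det(I + βHᴴH) − (N ln E_s + ln det(L_apᴴL_ap))
  = ∑_{k=1}^{N−ν} ln(s_{kk}² ∑_{j<k} |(S_a⁻¹)_{kj}|² + 1)`. -/
theorem gap_to_capacity_AWLD (M ν m : ℕ) (hM : 2 ≤ M) (hν : 1 ≤ ν) (hm : 1 ≤ m)
    (Es N0 β : ℝ) (hEs : 0 < Es) (hN0 : 0 < N0) (hβ : β = Es / N0)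
    (H : Matrix (Fin M) (Fin ν ⊕ Fin m) ℂ)
    (Pa : Matrix (Fin ν) (Fin ν) ℂ) (Ra : Matrix (Fin m) (Fin ν) ℂ)
    (Sa : Matrix (Fin m) (Fin m) ℂ)
    (hPa : ∀ i j : Fin ν, i < j → Pa i j = 0)
    (hPadiag : ∀ i : Fin ν, ∃ r : ℝ, 0 < r ∧ Pa i i = (r : ℂ))
    (hSa : ∀ i j : Fin m, i < j → Sa i j = 0)
    (hSadiag : ∀ i : Fin m, ∃ r : ℝ, 0 < r ∧ Sa i i = (r : ℂ))
    (hGram : (Matrix.fromBlocks Pa 0 Ra Sa)ᴴ * Matrix.fromBlocks Pa 0 Ra Sa =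
      ((N0 : ℂ))⁻¹ • (Hᴴ * H) + ((Es : ℂ))⁻¹ • 1)
    (Lap : Matrix (Fin ν ⊕ Fin m) (Fin ν ⊕ Fin m) ℂ)
    (hLap : Lap = Matrix.fromBlocks Pa 0 (Omega Sa * Sa⁻¹ * Ra) (Omega Sa)) :
    ((1 + (β : ℂ) • (Hᴴ * H)).PosDef ∧
      0 < (1 + (β : ℂ) • (Hᴴ * H)).det.re ∧ (1 + (β : ℂ) • (Hᴴ * H)).det.im = 0) ∧
    ((Lapᴴ * Lap).PosDef ∧
      0 < (Lapᴴ * Lap).det.re ∧ (Lapᴴ * Lap).det.im = 0) ∧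
    Real.log (1 + (β : ℂ) • (Hᴴ * H)).det.re -
        (((ν + m : ℕ) : ℝ) * Real.log Es + Real.log (Lapᴴ * Lap).det.re) =
      ∑ k : Fin m, Real.log
        ((Sa k k).re ^ 2 *
            (∑ j ∈ Finset.univ.filter (fun j : Fin m => j < k), ‖Sa⁻¹ k j‖ ^ 2) + 1) := by
  classical
  have hEsne : (Es : ℂ) ≠ 0 := by exact_mod_cast hEs.ne'
  -- diagonal entries are positive reals
  have hP : ∀ i, 0 < (Pa i i).re ∧ Pa i i = ((Pa i i).re : ℂ) := by
    intro i; obtain ⟨r, hr, he⟩ := hPadiag i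
    rw [he]; exact ⟨by simpa using hr, by simp⟩
  have hQ : ∀ k, 0 < (Sa k k).re ∧ Sa k k = ((Sa k k).re : ℂ) := by
    intro k; obtain ⟨r, hr, he⟩ := hSadiag k
    rw [he]; exact ⟨by simpa using hr, by simp⟩
  set P : ℝ := ∏ i, (Pa i i).re with hPdef
  set Sv : ℝ := ∏ k, (Sa k k).re with hSvdef
  have hPpos : 0 < P := Finset.prod_pos fun i _ => (hP i).1
  have hSvpos : 0 < Sv := Finset.prod_pos fun k _ => (hQ k).1
  have detPa : Pa.det = ((P : ℝ) : ℂ) := by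
    rw [myLowerDet Pa hPa, hPdef, Complex.ofReal_prod]
    exact Finset.prod_congr rfl fun i _ => (hP i).2
  have detSa : Sa.det = ((Sv : ℝ) : ℂ) := by
    rw [myLowerDet Sa hSa, hSvdef, Complex.ofReal_prod]
    exact Finset.prod_congr rfl fun k _ => (hQ k).2
  have hdetSa : IsUnit Sa.det := by
    rw [detSa]; exact isUnit_iff_ne_zero.2 (Complex.ofReal_ne_zero.2 hSvpos.ne')
  obtain ⟨hinvtri, hinvdiag⟩ := myInvTri Sa hSa hdetSa
  -- the weights w k
  set w : Fin m → ℝ := fun k => ∑ j, ‖Sa⁻¹ k j‖ ^ 2 with hwdef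
  have hw : ∀ k, w k =
      (∑ j ∈ Finset.univ.filter (fun j : Fin m => j < k), ‖Sa⁻¹ k j‖ ^ 2)
        + ((Sa k k).re)⁻¹ ^ 2 := by
    intro k
    show (∑ j, ‖Sa⁻¹ k j‖ ^ 2) = _
    rw [← Finset.sum_filter_add_sum_filter_not Finset.univ (fun j : Fin m => j < k)]
    congr 1
    rw [Finset.sum_eq_single_of_mem k (by simp)]
    · rw [hinvdiag k, (hQ k).2, ← Complex.ofReal_inv]
      rw [Complex.norm_real, Real.norm_eq_abs, sq_abs]
      simp
    · intro j hj hjk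
      have hkj : k < j :=
        lt_of_le_of_ne (not_lt.1 (by simpa using (Finset.mem_filter.1 hj).2)) (Ne.symm hjk)
      rw [hinvtri k j hkj]
      simp
  have hwpos : ∀ k, 0 < w k := by
    intro k
    rw [hw k]
    exact add_pos_of_nonneg_of_pos
      (Finset.sum_nonneg fun j _ => sq_nonneg _)
      (pow_pos (inv_pos.2 (hQ k).1) 2)
  set ωf : Fin m → ℝ := fun k => (Real.sqrt (w k))⁻¹ with hωdef
  have hωpos : ∀ k, 0 < ωf k := fun k => inv_pos.2 (Real.sqrt_pos.2 (hwpos k))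
  set W : ℝ := ∏ k, ωf k with hWdef
  have hWpos : 0 < W := Finset.prod_pos fun k _ => hωpos k
  have hOmega : Omega Sa = Matrix.diagonal fun k => ((ωf k : ℝ) : ℂ) := rfl
  have detOmega : (Omega Sa).det = ((W : ℝ) : ℂ) := by
    rw [hOmega, Matrix.det_diagonal, hWdef, Complex.ofReal_prod]
  -- determinant of Lap
  have detLap : Lap.det = ((P * W : ℝ) : ℂ) := by
    rw [hLap, Matrix.det_fromBlocks_zero₁₂, detPa, detOmega]
    push_cast; ring
  have detLapH : (Lapᴴ * Lap).det = (((P * W) ^ 2 : ℝ) : ℂ) := by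
    rw [Matrix.det_mul, Matrix.det_conjTranspose, detLap]
    rw [Complex.star_def, Complex.conj_ofReal]
    push_cast; ring
  have hUnitLap : IsUnit Lap.det := by
    rw [detLap]
    exact isUnit_iff_ne_zero.2 (Complex.ofReal_ne_zero.2 (mul_pos hPpos hWpos).ne')
  -- the Gram identity
  set La := Matrix.fromBlocks Pa 0 Ra Sa with hLa
  have detLa : La.det = ((P * Sv : ℝ) : ℂ) := by
    rw [hLa, Matrix.det_fromBlocks_zero₁₂, detPa, detSa]
    push_cast; ring
  have hβc : (β : ℂ) = (Es : ℂ) * (N0 : ℂ)⁻¹ := by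
    rw [hβ]; push_cast; ring
  have hEq : (1 : Matrix (Fin ν ⊕ Fin m) (Fin ν ⊕ Fin m) ℂ) + (β : ℂ) • (Hᴴ * H)
      = (Es : ℂ) • (Laᴴ * La) := by
    rw [hLa, hGram, smul_add, smul_smul, smul_smul, mul_inv_cancel₀ hEsne, one_smul,
      hβc, add_comm]
  have hcard : Fintype.card (Fin ν ⊕ Fin m) = ν + m := by
    simp [Fintype.card_sum]
  have hdet1 : (1 + (β : ℂ) • (Hᴴ * H)).det = ((Es ^ (ν + m) * (P * Sv) ^ 2 : ℝ) : ℂ) := by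
    rw [hEq, Matrix.det_smul, Matrix.det_mul, Matrix.det_conjTranspose, detLa, hcard]
    rw [Complex.star_def, Complex.conj_ofReal]
    push_cast; ring
  -- positive definiteness of 1 + β HᴴH
  set c : ℂ := ((Real.sqrt Es : ℝ) : ℂ) with hcdef
  have hcc : star c * c = (Es : ℂ) := by
    rw [hcdef, Complex.star_def, Complex.conj_ofReal, ← Complex.ofReal_mul,
      Real.mul_self_sqrt hEs.le]
  have hcne : c ≠ 0 := by
    rw [hcdef]
    exact Complex.ofReal_ne_zero.2 (Real.sqrt_pos.2 hEs).ne'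
  have hBform : (1 : Matrix (Fin ν ⊕ Fin m) (Fin ν ⊕ Fin m) ℂ) + (β : ℂ) • (Hᴴ * H)
      = (c • La)ᴴ * (c • La) := by
    rw [Matrix.conjTranspose_smul, Matrix.smul_mul, Matrix.mul_smul, smul_smul, hcc, hEq]
  have hUnitB : IsUnit ((c • La).det) := by
    rw [Matrix.det_smul, detLa]
    exact isUnit_iff_ne_zero.2 (mul_ne_zero (pow_ne_zero _ hcne)
      (Complex.ofReal_ne_zero.2 (mul_pos hPpos hSvpos).ne'))
  have hPD1 : (1 + (β : ℂ) • (Hᴴ * H)).PosDef := by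
    rw [hBform]; exact myPosDef _ hUnitB
  have hPD2 : (Lapᴴ * Lap).PosDef := myPosDef _ hUnitLap
  refine ⟨⟨hPD1, ?_, ?_⟩, ⟨hPD2, ?_, ?_⟩, ?_⟩
  · rw [hdet1, Complex.ofReal_re]
    exact mul_pos (pow_pos hEs _) (pow_pos (mul_pos hPpos hSvpos) 2)
  · rw [hdet1, Complex.ofReal_im]
  · rw [detLapH, Complex.ofReal_re]
    exact pow_pos (mul_pos hPpos hWpos) 2
  · rw [detLapH, Complex.ofReal_im]
  -- the log identity
  rw [hdet1, detLapH, Complex.ofReal_re, Complex.ofReal_re]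
  have hlog1 : Real.log (Es ^ (ν + m) * (P * Sv) ^ 2)
      = ((ν + m : ℕ) : ℝ) * Real.log Es + 2 * (Real.log P + Real.log Sv) := by
    rw [Real.log_mul (pow_pos hEs _).ne' (pow_pos (mul_pos hPpos hSvpos) 2).ne',
      Real.log_pow, Real.log_pow, Real.log_mul hPpos.ne' hSvpos.ne']
    push_cast; ring
  have hlog2 : Real.log ((P * W) ^ 2) = 2 * (Real.log P + Real.log W) := by
    rw [Real.log_pow, Real.log_mul hPpos.ne' hWpos.ne']
    push_cast; ring
  rw [hlog1, hlog2]
  have hlogSv : Real.log Sv = ∑ k, Real.log ((Sa k k).re) := by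
    rw [hSvdef, Real.log_prod fun k _ => (hQ k).1.ne']
  have hlogW : Real.log W = ∑ k, Real.log (ωf k) := by
    rw [hWdef, Real.log_prod fun k _ => (hωpos k).ne']
  rw [hlogSv, hlogW]
  have key : ∀ k : Fin m,
      Real.log ((Sa k k).re ^ 2 *
          (∑ j ∈ Finset.univ.filter (fun j : Fin m => j < k), ‖Sa⁻¹ k j‖ ^ 2) + 1)
      = 2 * Real.log ((Sa k k).re) - 2 * Real.log (ωf k) := by
    intro k
    have hs := (hQ k).1
    have hcancel : (Sa k k).re ^ 2 * ((Sa k k).re⁻¹ ^ 2) = 1 := by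
      rw [← mul_pow, mul_inv_cancel₀ hs.ne', one_pow]
    have h1 : (Sa k k).re ^ 2 *
        (∑ j ∈ Finset.univ.filter (fun j : Fin m => j < k), ‖Sa⁻¹ k j‖ ^ 2) + 1
        = (Sa k k).re ^ 2 * w k := by
      rw [hw k, mul_add, hcancel]
    rw [h1, Real.log_mul (pow_ne_zero _ hs.ne') (hwpos k).ne', Real.log_pow]
    have h2 : Real.log (ωf k) = - (Real.log (w k) / 2) := by
      show Real.log (Real.sqrt (w k))⁻¹ = _
      rw [Real.log_inv, Real.log_sqrt (hwpos k).le]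
    rw [h2]; push_cast; ring
  rw [Finset.sum_congr rfl fun k _ => key k, Finset.sum_sub_distrib,
    ← Finset.mul_sum, ← Finset.mul_sum]
  ring
end

section
/- Let N ≥ 1 and let U, V ∈ ℂ^{N×N} be invertible. Then U·Uᴴ and V·Vᴴ are positive-definite Hermitian matrices with positive real determinants, and the real-valued function f(U, V) = ln det(U·Uᴴ) − ‖U·V‖_F² satisfies f(U, V) ≤ −ln det(V·Vᴴ) − N, with equality when U = V⁻¹. In other words, U = V⁻¹ maximizes U ↦ f(U, V) over invertible matrices, and the maximum value is −ln det(V·Vᴴ) − N (equivalently, −Σ_{k=1}^N ln(ṽ_{kk}²) − N, where ṽ_{kk} are the diagonal entries of a lower-triangular Cholesky factor L̃ of V·Vᴴ = L̃·L̃ᴴ with positive diagonal). -/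
open Matrix BigOperators
open scoped ComplexOrder

lemma aux_posDef {N : ℕ} (A : Matrix (Fin N) (Fin N) ℂ) (hA : IsUnit A) :
    (A * Aᴴ).PosDef := by
  refine posDef_iff_dotProduct_mulVec.mpr ⟨isHermitian_mul_conjTranspose_self A, fun x hx => ?_⟩
  have h1 : star x ⬝ᵥ (A * Aᴴ) *ᵥ x = star (Aᴴ *ᵥ x) ⬝ᵥ (Aᴴ *ᵥ x) := by
    rw [star_mulVec, conjTranspose_conjTranspose, ← mulVec_mulVec, dotProduct_mulVec]
  rw [h1]
  refine dotProduct_star_self_pos_iff.mpr fun h => hx ?_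
  have hAH : IsUnit Aᴴ := by
    rcases hA with ⟨u, rfl⟩
    exact ⟨⟨(u : Matrix (Fin N) (Fin N) ℂ)ᴴ, ((u⁻¹ : _) : Matrix (Fin N) (Fin N) ℂ)ᴴ,
      by rw [← conjTranspose_mul, ← Units.val_mul, inv_mul_cancel]; simp,
      by rw [← conjTranspose_mul, ← Units.val_mul, mul_inv_cancel]; simp⟩, rfl⟩
  have hinj := (mulVec_injective_iff_isUnit).mpr hAH
  have : Aᴴ *ᵥ x = Aᴴ *ᵥ 0 := by simpa using h
  exact hinj this

lemma aux_trace {N : ℕ} {A : Matrix (Fin N) (Fin N) ℂ} (hA : A.IsHermitian) :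
    A.trace = ∑ i, (hA.eigenvalues i : ℂ) := by
  conv_lhs => rw [hA.spectral_theorem]
  rw [Unitary.conjStarAlgAut_apply, Matrix.trace_mul_cycle,
    (Matrix.mem_unitaryGroup_iff').mp (hA.eigenvectorUnitary).2, one_mul, trace_diagonal]
  rfl

/-- **Lemma 5 (trace formula).** For invertible `U, V ∈ ℂ^{N×N}` (`N ≥ 1`), the matrices
`UUᴴ` and `VVᴴ` are positive definite Hermitian with positive real determinants, and the
function `f(U,V) = ln det(UUᴴ) − ‖UV‖_F²` satisfies `f(U,V) ≤ −ln det(VVᴴ) − N`, with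
equality when `U = V⁻¹`. -/
theorem trace_formula (N : ℕ) (hN : 1 ≤ N) (U V : Matrix (Fin N) (Fin N) ℂ)
    (hU : IsUnit U) (hV : IsUnit V) :
    ((U * Uᴴ).PosDef ∧ 0 < (U * Uᴴ).det.re ∧ (U * Uᴴ).det.im = 0) ∧
    ((V * Vᴴ).PosDef ∧ 0 < (V * Vᴴ).det.re ∧ (V * Vᴴ).det.im = 0) ∧
    (Real.log (U * Uᴴ).det.re - ∑ k : Fin N, ∑ j : Fin N, ‖(U * V) k j‖ ^ 2 ≤
      -Real.log (V * Vᴴ).det.re - N) ∧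
    (Real.log (V⁻¹ * (V⁻¹)ᴴ).det.re - ∑ k : Fin N, ∑ j : Fin N, ‖(V⁻¹ * V) k j‖ ^ 2 =
      -Real.log (V * Vᴴ).det.re - N) := by
  have posRe : ∀ (A : Matrix (Fin N) (Fin N) ℂ), A.PosDef →
      0 < A.det.re ∧ A.det.im = 0 := by
    intro A hA
    have := hA.det_pos
    rw [Complex.lt_def] at this
    exact ⟨by simpa using this.1, by simpa using this.2.symm⟩
  have hPU := aux_posDef U hU
  have hPV := aux_posDef V hV
  obtain ⟨hUre, hUim⟩ := posRe _ hPU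
  obtain ⟨hVre, hVim⟩ := posRe _ hPV
  refine ⟨⟨hPU, hUre, hUim⟩, ⟨hPV, hVre, hVim⟩, ?_, ?_⟩
  · -- main inequality
    set W := U * V with hWdef
    have hW : IsUnit W := hU.mul hV
    have hPW := aux_posDef W hW
    have hHW := hPW.isHermitian
    set μ := hHW.eigenvalues with hμdef
    have hμpos : ∀ i, 0 < μ i := hPW.eigenvalues_pos
    -- determinant of W Wᴴ
    have hdet : (W * Wᴴ).det = (U * Uᴴ).det * (V * Vᴴ).det := by
      simp only [hWdef, det_mul, conjTranspose_mul, det_conjTranspose]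
      ring
    have hdetprod : (W * Wᴴ).det.re = ∏ i, μ i := by
      rw [hHW.det_eq_prod_eigenvalues]
      norm_cast
    have hre : (W * Wᴴ).det.re = (U * Uᴴ).det.re * (V * Vᴴ).det.re := by
      rw [hdet, Complex.mul_re, hUim, hVim]; ring
    -- trace
    have htr : (∑ k : Fin N, ∑ j : Fin N, ‖W k j‖ ^ 2) = ∑ i, μ i := by
      have h1 : (W * Wᴴ).trace.re = ∑ i, μ i := by
        rw [aux_trace hHW]
        norm_cast
      rw [← h1]
      simp only [Matrix.trace, Matrix.diag, Matrix.mul_apply, Matrix.conjTranspose_apply,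
        Complex.re_sum]
      refine Finset.sum_congr rfl fun k _ => Finset.sum_congr rfl fun j _ => ?_
      rw [RCLike.star_def, Complex.mul_conj]
      simp [Complex.normSq_eq_norm_sq, ← Complex.ofReal_pow]
    -- log identity
    have hlog : Real.log (U * Uᴴ).det.re = (∑ i, Real.log (μ i)) - Real.log (V * Vᴴ).det.re := by
      have : ∑ i, Real.log (μ i) = Real.log (∏ i, μ i) := by
        rw [Real.log_prod (fun i _ => (hμpos i).ne')]
      rw [this, ← hdetprod, hre, Real.log_mul hUre.ne' hVre.ne']
      ring
    have hineq : (∑ i, Real.log (μ i)) - (∑ i, μ i) ≤ -(N : ℝ) := by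
      have : ∀ i : Fin N, Real.log (μ i) - μ i ≤ -1 := fun i => by
        have := Real.log_le_sub_one_of_pos (hμpos i)
        linarith
      calc (∑ i, Real.log (μ i)) - (∑ i, μ i) = ∑ i : Fin N, (Real.log (μ i) - μ i) := by
            rw [Finset.sum_sub_distrib]
        _ ≤ ∑ _i : Fin N, (-1 : ℝ) := Finset.sum_le_sum fun i _ => this i
        _ = -(N : ℝ) := by simp
    rw [hlog, htr]
    linarith
  · -- equality case
    have hVd : IsUnit V.det := (Matrix.isUnit_iff_isUnit_det V).mp hV
    have hVinv1 : V⁻¹ * V = 1 := Matrix.nonsing_inv_mul V hVd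
    have hVinv2 : V * V⁻¹ = 1 := Matrix.mul_nonsing_inv V hVd
    have hVinvU : IsUnit V⁻¹ := ⟨⟨V⁻¹, V, hVinv1, hVinv2⟩, rfl⟩
    have hPVi := aux_posDef V⁻¹ hVinvU
    obtain ⟨haRe, haIm⟩ := posRe _ hPVi
    -- the sum equals N
    have hsum : (∑ k : Fin N, ∑ j : Fin N, ‖(V⁻¹ * V) k j‖ ^ 2) = (N : ℝ) := by
      rw [hVinv1]
      have : ∀ k j : Fin N, ‖(1 : Matrix (Fin N) (Fin N) ℂ) k j‖ ^ 2
          = if k = j then (1 : ℝ) else 0 := by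
        intro k j
        by_cases h : k = j <;> simp [Matrix.one_apply, h]
      simp only [this]
      simp
    -- determinant relation
    have hmul : (V⁻¹ * (V⁻¹)ᴴ).det * (V * Vᴴ).det = 1 := by
      simp only [det_mul, det_conjTranspose]
      have h1 : V⁻¹.det * V.det = 1 := by
        rw [← det_mul, hVinv1, det_one]
      have h2 : star V⁻¹.det * star V.det = star (V⁻¹.det * V.det) := (star_mul' _ _).symm
      calc V⁻¹.det * star V⁻¹.det * (V.det * star V.det)
          = (V⁻¹.det * V.det) * (star V⁻¹.det * star V.det) := by ring
        _ = 1 := by rw [h2, h1]; simp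
    have hreMul : (V⁻¹ * (V⁻¹)ᴴ).det.re * (V * Vᴴ).det.re = 1 := by
      have := congrArg Complex.re hmul
      rwa [Complex.mul_re, haIm, hVim, mul_zero, sub_zero, Complex.one_re] at this
    have hinvRe : (V⁻¹ * (V⁻¹)ᴴ).det.re = ((V * Vᴴ).det.re)⁻¹ :=
      eq_inv_of_mul_eq_one_left hreMul
    rw [hsum, hinvRe, Real.log_inv]
end

section
/- Let N ≥ 2 and 1 ≤ ν ≤ N−1. Let L_a = [[P, 0],[R, S]] ∈ ℂ^{N×N}, where P ∈ ℂ^{ν×ν} is lower-triangular and invertible, S ∈ ℂ^{(N−ν)×(N−ν)} is lower-triangular and invertible, and R ∈ ℂ^{(N−ν)×ν} is arbitrary. For an invertible J ∈ ℂ^{N×N} define Ĩ(J) = ln det(Jᴴ·J) − ‖J·L_a⁻¹‖_F². Let J_opt = [[P, 0],[Ω(S)·S⁻¹·R, Ω(S)]]. Then J_opt is invertible of the punctured form, and for every invertible J of the punctured form J = [[J₁, 0],[J₂, J₃]] — with J₁ ∈ ℂ^{ν×ν} lower-triangular, J₂ ∈ ℂ^{(N−ν)×ν} arbitrary, and J₃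 a real diagonal (N−ν)×(N−ν) matrix — one has Ĩ(J) ≤ Ĩ(J_opt), and moreover Ĩ(J_opt) = ln det(Pᴴ·P) + ln det(Ω(S)²) − N. -/
open Matrix BigOperators

/-- The objective `Ĩ(J) = ln det(JᴴJ) − ‖J L_a⁻¹‖_F²` (for invertible `J`, `JᴴJ` is
positive definite Hermitian, so its determinant is a positive real and `ln det` is taken
of its real part). -/
noncomputable def Itilde {ι : Type*} [Fintype ι] [DecidableEq ι]
    (La J : Matrix ι ι ℂ) : ℝ :=
  Real.log (Jᴴ * J).det.re - ∑ k, ∑ j, ‖(J * La⁻¹) k j‖ ^ 2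

-- aux 1: Frobenius of fromBlocks
lemma frob_fromBlocks {a b : ℕ} (A : Matrix (Fin a) (Fin a) ℂ) (B : Matrix (Fin a) (Fin b) ℂ)
    (C : Matrix (Fin b) (Fin a) ℂ) (D : Matrix (Fin b) (Fin b) ℂ) :
    ∑ k, ∑ j, ‖fromBlocks A B C D k j‖^2 =
      ((∑ k, ∑ j, ‖A k j‖^2) + (∑ k, ∑ j, ‖B k j‖^2)) +
      ((∑ k, ∑ j, ‖C k j‖^2) + (∑ k, ∑ j, ‖D k j‖^2)) := by
  simp [Fintype.sum_sum_type, Finset.sum_add_distrib]; ring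

-- aux 2: re of det(JᴴJ)
lemma re_det_conj (n : Type*) [Fintype n] [DecidableEq n] (J : Matrix n n ℂ) :
    (Jᴴ * J).det.re = ‖J.det‖^2 := by
  rw [Matrix.det_mul, Matrix.det_conjTranspose]
  have : (star J.det) * J.det = ((Complex.normSq J.det : ℝ) : ℂ) := by
    rw [mul_comm]; exact (Complex.mul_conj J.det)
  rw [this, Complex.ofReal_re, Complex.normSq_eq_norm_sq]

-- aux 3: triangular log bound
lemma log_tri_bound (n : ℕ) (T : Matrix (Fin n) (Fin n) ℂ)
    (hT : ∀ i j : Fin n, i < j → T i j = 0) (hdet : T.det ≠ 0) :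
    Real.log (‖T.det‖^2) ≤ (∑ k, ∑ j, ‖T k j‖^2) - n := by
  have hdiag : T.det = ∏ i, T i i :=
    Matrix.det_of_lowerTriangular T (fun i j h => hT i j h)
  have hne : ∀ i : Fin n, T i i ≠ 0 := by
    rw [hdiag] at hdet
    exact fun i => Finset.prod_ne_zero_iff.mp hdet i (Finset.mem_univ i)
  have h1 : ‖T.det‖^2 = ∏ i, ‖T i i‖^2 := by
    rw [hdiag, norm_prod, ← Finset.prod_pow]
  rw [h1, Real.log_prod (fun i _ => pow_ne_zero 2 (norm_ne_zero_iff.mpr (hne i)))]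
  have h2 : ∀ i : Fin n, Real.log (‖T i i‖^2) ≤ ‖T i i‖^2 - 1 := fun i =>
    Real.log_le_sub_one_of_pos (pow_pos (norm_pos_iff.mpr (hne i)) 2)
  calc ∑ i, Real.log (‖T i i‖^2) ≤ ∑ i, (‖T i i‖^2 - 1) := Finset.sum_le_sum (fun i _ => h2 i)
    _ = (∑ i, ‖T i i‖^2) - n := by simp [Finset.sum_sub_distrib]
    _ ≤ (∑ k, ∑ j, ‖T k j‖^2) - n := by
        gcongr with k _
        exact Finset.single_le_sum (f := fun j => ‖T k j‖^2)
          (fun j _ => by positivity) (Finset.mem_univ k)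
lemma Itilde_eval {ν m : ℕ} (P : Matrix (Fin ν) (Fin ν) ℂ) (R : Matrix (Fin m) (Fin ν) ℂ)
    (S : Matrix (Fin m) (Fin m) ℂ) (hPunit : IsUnit P) (hSunit : IsUnit S)
    (J1 : Matrix (Fin ν) (Fin ν) ℂ) (J2 : Matrix (Fin m) (Fin ν) ℂ) (d : Fin m → ℝ)
    (hJ1 : J1.det ≠ 0) (hd : ∀ k, d k ≠ 0) :
    Itilde (fromBlocks P 0 R S) (fromBlocks J1 0 J2 (Matrix.diagonal fun k => ((d k : ℝ) : ℂ))) =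
      (Real.log (‖J1.det‖^2) + ∑ k, Real.log ((d k)^2)) -
      ((∑ k, ∑ j, ‖(J1 * P⁻¹) k j‖^2)
        + (∑ k, ∑ j, ‖(J2 * P⁻¹ + (Matrix.diagonal fun k => ((d k : ℝ) : ℂ)) * -(S⁻¹ * R * P⁻¹)) k j‖^2)
        + ∑ k, (d k)^2 * ∑ j, ‖S⁻¹ k j‖^2) := by
  set D : Matrix (Fin m) (Fin m) ℂ := Matrix.diagonal fun k => ((d k : ℝ) : ℂ) with hD
  have hLainv : (fromBlocks P 0 R S)⁻¹ = fromBlocks P⁻¹ 0 (-(S⁻¹ * R * P⁻¹)) S⁻¹ :=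
    Matrix.inv_fromBlocks_zero₁₂_of_isUnit_iff P R S (iff_of_true hPunit hSunit)
  have hprod : fromBlocks J1 0 J2 D * (fromBlocks P 0 R S)⁻¹ =
      fromBlocks (J1 * P⁻¹) 0 (J2 * P⁻¹ + D * -(S⁻¹ * R * P⁻¹)) (D * S⁻¹) := by
    rw [hLainv, fromBlocks_multiply]
    simp
  have hDS : ∀ k : Fin m, ∑ j, ‖(D * S⁻¹) k j‖^2 = (d k)^2 * ∑ j, ‖S⁻¹ k j‖^2 := by
    intro k
    rw [Finset.mul_sum]
    refine Finset.sum_congr rfl (fun j _ => ?_)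
    rw [hD, Matrix.diagonal_mul, norm_mul, mul_pow, Complex.norm_real, Real.norm_eq_abs, sq_abs]
  have hdet : (fromBlocks J1 0 J2 D).det = J1.det * ∏ k, ((d k : ℝ) : ℂ) := by
    rw [Matrix.det_fromBlocks_zero₁₂, hD, Matrix.det_diagonal]
  have hnorm : ‖(fromBlocks J1 0 J2 D).det‖^2 = ‖J1.det‖^2 * ∏ k, (d k)^2 := by
    rw [hdet, norm_mul, mul_pow, norm_prod]
    congr 1
    rw [← Finset.prod_pow]
    refine Finset.prod_congr rfl (fun k _ => ?_)
    rw [Complex.norm_real, Real.norm_eq_abs, sq_abs]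
  have hlog : Real.log (‖J1.det‖^2 * ∏ k, (d k)^2)
      = Real.log (‖J1.det‖^2) + ∑ k, Real.log ((d k)^2) := by
    rw [Real.log_mul (pow_ne_zero 2 (norm_ne_zero_iff.mpr hJ1))
        (Finset.prod_ne_zero_iff.mpr (fun k _ => pow_ne_zero 2 (hd k))),
      Real.log_prod (fun k _ => pow_ne_zero 2 (hd k))]
  unfold Itilde
  rw [re_det_conj, hnorm, hlog, hprod, frob_fromBlocks]
  simp only [hDS, Matrix.zero_apply, norm_zero, ne_eq, OfNat.ofNat_ne_zero,
    not_false_eq_true, zero_pow, Finset.sum_const_zero]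
  ring

lemma scalar_bound {c d : ℝ} (hc : 0 < c) (hd : d ≠ 0) :
    Real.log (d^2) - d^2 * c ≤ Real.log c⁻¹ - 1 := by
  have hd2 : 0 < d^2 := lt_of_le_of_ne (sq_nonneg d) (Ne.symm (pow_ne_zero 2 hd))
  have h := Real.log_le_sub_one_of_pos (mul_pos hd2 hc)
  rw [Real.log_mul (ne_of_gt hd2) (ne_of_gt hc)] at h
  rw [Real.log_inv]
  linarith

lemma frob_one (n : ℕ) :
    ∑ k : Fin n, ∑ j : Fin n, ‖(1 : Matrix (Fin n) (Fin n) ℂ) k j‖^2 = n := by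
  have h : ∀ k : Fin n, ∑ j : Fin n, ‖(1 : Matrix (Fin n) (Fin n) ℂ) k j‖^2 = 1 := by
    intro k
    rw [Finset.sum_eq_single k]
    · simp [Matrix.one_apply]
    · intro j _ hj
      simp [Matrix.one_apply, Ne.symm hj]
    · simp
  rw [Finset.sum_congr rfl (fun k _ => h k)]
  simp

/-- **Optimality of the punctured augmented matrix.** With `N = ν + m` (`ν, m ≥ 1`),
`L_a = [[P,0],[R,S]]` where `P`, `S` are lower-triangular and invertible, and
`J_opt = [[P,0],[Ω(S)S⁻¹R, Ω(S)]]`: `J_opt` is invertible, every invertible `J` of the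
punctured form `[[J₁,0],[J₂,J₃]]` (with `J₁` lower-triangular, `J₂` arbitrary, `J₃` real
diagonal) satisfies `Ĩ(J) ≤ Ĩ(J_opt)`, and
`Ĩ(J_opt) = ln det(PᴴP) + ln det(Ω(S)²) − N`. -/
theorem punctured_optimum (ν m : ℕ) (hν : 1 ≤ ν) (hm : 1 ≤ m)
    (P : Matrix (Fin ν) (Fin ν) ℂ) (R : Matrix (Fin m) (Fin ν) ℂ)
    (S : Matrix (Fin m) (Fin m) ℂ)
    (hPlow : ∀ i j : Fin ν, i < j → P i j = 0) (hPunit : IsUnit P)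
    (hSlow : ∀ i j : Fin m, i < j → S i j = 0) (hSunit : IsUnit S)
    (La Jopt : Matrix (Fin ν ⊕ Fin m) (Fin ν ⊕ Fin m) ℂ)
    (hLa : La = Matrix.fromBlocks P 0 R S)
    (hJopt : Jopt = Matrix.fromBlocks P 0 (Omega S * S⁻¹ * R) (Omega S)) :
    IsUnit Jopt ∧
    (∀ (J1 : Matrix (Fin ν) (Fin ν) ℂ) (J2 : Matrix (Fin m) (Fin ν) ℂ) (J3 : Fin m → ℝ),
      (∀ i j : Fin ν, i < j → J1 i j = 0) →
      (∀ J : Matrix (Fin ν ⊕ Fin m) (Fin ν ⊕ Fin m) ℂ,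
        J = Matrix.fromBlocks J1 0 J2 (Matrix.diagonal fun k => ((J3 k : ℝ) : ℂ)) →
        IsUnit J → Itilde La J ≤ Itilde La Jopt)) ∧
    Itilde La Jopt =
      Real.log (Pᴴ * P).det.re + Real.log ((Omega S ^ 2).det.re) - ((ν + m : ℕ) : ℝ) := by
  -- setup
  set c : Fin m → ℝ := fun k => ∑ j, ‖S⁻¹ k j‖ ^ 2 with hcdef
  set ω : Fin m → ℝ := fun k => (Real.sqrt (c k))⁻¹ with hωdef
  have hOm : Omega S = Matrix.diagonal fun k => ((ω k : ℝ) : ℂ) := rfl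
  have hPdet : IsUnit P.det := (Matrix.isUnit_iff_isUnit_det P).mp hPunit
  have hSdet : IsUnit S.det := (Matrix.isUnit_iff_isUnit_det S).mp hSunit
  have hc : ∀ k, 0 < c k := by
    intro k
    have hnn : 0 ≤ c k := Finset.sum_nonneg (fun j _ => by positivity)
    rcases hnn.lt_or_eq with h | h
    · exact h
    · exfalso
      have hz : ∀ j, S⁻¹ k j = 0 := by
        intro j
        have := (Finset.sum_eq_zero_iff_of_nonneg
          (fun j _ => by positivity : ∀ j ∈ Finset.univ, (0:ℝ) ≤ ‖S⁻¹ k j‖^2)).mp h.symm j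
          (Finset.mem_univ j)
        simpa using this
      have h1 : (S⁻¹ * S) k k = 1 := by
        rw [Matrix.nonsing_inv_mul S hSdet]; simp [Matrix.one_apply]
      rw [Matrix.mul_apply] at h1
      simp [hz] at h1
  have hω : ∀ k, 0 < ω k := fun k => inv_pos.mpr (Real.sqrt_pos.mpr (hc k))
  have hω2 : ∀ k, (ω k)^2 = (c k)⁻¹ := by
    intro k
    show ((Real.sqrt (c k))⁻¹)^2 = (c k)⁻¹
    rw [inv_pow, Real.sq_sqrt (hc k).le]
  have hOmunit : IsUnit (Omega S) := by
    rw [Matrix.isUnit_iff_isUnit_det, hOm, Matrix.det_diagonal]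
    exact isUnit_iff_ne_zero.mpr (Finset.prod_ne_zero_iff.mpr
      (fun k _ => Complex.ofReal_ne_zero.mpr (hω k).ne'))
  have hωne : ∀ k, ω k ≠ 0 := fun k => (hω k).ne'
  -- value at Jopt
  have hIopt : Itilde La Jopt =
      Real.log (‖P.det‖^2) + (∑ k, Real.log ((ω k)^2)) - ((ν:ℝ) + (m:ℝ)) := by
    rw [hLa, hJopt, hOm]
    rw [Itilde_eval P R S hPunit hSunit P _ ω hPdet.ne_zero hωne]
    rw [Matrix.mul_nonsing_inv P hPdet, frob_one]
    have hmid : (Matrix.diagonal (fun k => ((ω k:ℝ):ℂ)) * S⁻¹ * R) * P⁻¹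
        + Matrix.diagonal (fun k => ((ω k:ℝ):ℂ)) * -(S⁻¹ * R * P⁻¹) = 0 := by
      simp only [Matrix.mul_neg, Matrix.mul_assoc]
      exact add_neg_cancel _
    rw [hmid]
    have hsum1 : ∑ k : Fin m, (ω k)^2 * (∑ j, ‖S⁻¹ k j‖^2) = (m:ℝ) := by
      have h1 : ∀ k : Fin m, (ω k)^2 * (∑ j, ‖S⁻¹ k j‖^2) = 1 := by
        intro k; rw [hω2 k]; exact inv_mul_cancel₀ (hc k).ne'
      rw [Finset.sum_congr rfl (fun k _ => h1 k)]
      simp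
    rw [hsum1]
    simp only [Matrix.zero_apply, norm_zero, ne_eq, OfNat.ofNat_ne_zero, not_false_eq_true,
      zero_pow, Finset.sum_const_zero]
    ring
  refine ⟨?_, ?_, ?_⟩
  · rw [hJopt]
    exact Matrix.isUnit_fromBlocks_zero₁₂.mpr ⟨hPunit, hOmunit⟩
  · intro J1 J2 J3 hJ1low J hJeq hJu
    subst hJeq
    have hpair := Matrix.isUnit_fromBlocks_zero₁₂.mp hJu
    have hJ1det : J1.det ≠ 0 := ((Matrix.isUnit_iff_isUnit_det _).mp hpair.1).ne_zero
    have hdne : ∀ k, J3 k ≠ 0 := by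
      intro k hk0
      have h2 := (Matrix.isUnit_iff_isUnit_det _).mp hpair.2
      rw [Matrix.det_diagonal] at h2
      exact h2.ne_zero (Finset.prod_eq_zero (Finset.mem_univ k) (by rw [hk0]; simp))
    rw [hIopt, hLa, Itilde_eval P R S hPunit hSunit J1 J2 J3 hJ1det hdne]
    -- triangularity of J1 * P⁻¹
    have hPinv : ∀ i j : Fin ν, i < j → P⁻¹ i j = 0 := by
      obtain ⟨inst⟩ := hPunit.nonempty_invertible
      have hBT : BlockTriangular P (OrderDual.toDual) := fun i j h => hPlow _ _ h
      have h2 := Matrix.blockTriangular_inv_of_blockTriangular hBT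
      exact fun i j hij => h2 hij
    have hTlow : ∀ i j : Fin ν, i < j → (J1 * P⁻¹) i j = 0 := by
      have h1 : BlockTriangular J1 (OrderDual.toDual) := fun i j h => hJ1low _ _ h
      have h2 : BlockTriangular P⁻¹ (OrderDual.toDual) := fun i j h => hPinv _ _ h
      exact fun i j hij => (h1.mul h2) hij
    have hTdet : (J1 * P⁻¹).det ≠ 0 := by
      rw [Matrix.det_mul]
      exact mul_ne_zero hJ1det (Matrix.isUnit_nonsing_inv_det P hPdet).ne_zero
    have hA2 := log_tri_bound ν (J1 * P⁻¹) hTlow hTdet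
    have hJ1fact : J1.det = (J1 * P⁻¹).det * P.det := by
      rw [← Matrix.det_mul, Matrix.nonsing_inv_mul_cancel_right P J1 hPdet]
    have hA1 : Real.log (‖J1.det‖^2)
        = Real.log (‖(J1 * P⁻¹).det‖^2) + Real.log (‖P.det‖^2) := by
      rw [hJ1fact, norm_mul, mul_pow,
        Real.log_mul (pow_ne_zero 2 (norm_ne_zero_iff.mpr hTdet))
          (pow_ne_zero 2 (norm_ne_zero_iff.mpr hPdet.ne_zero))]
    have hA3 : ∑ k, (Real.log ((J3 k)^2) - (J3 k)^2 * (∑ j, ‖S⁻¹ k j‖^2))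
        ≤ ∑ k, (Real.log ((ω k)^2) - 1) := by
      refine Finset.sum_le_sum (fun k _ => ?_)
      rw [hω2 k]
      exact scalar_bound (hc k) (hdne k)
    rw [Finset.sum_sub_distrib, Finset.sum_sub_distrib] at hA3
    simp only [Finset.sum_const, Finset.card_univ, Fintype.card_fin, nsmul_eq_mul,
      mul_one] at hA3
    have hA4 : (0:ℝ) ≤ ∑ k, ∑ j,
        ‖(J2 * P⁻¹ + (Matrix.diagonal fun k => ((J3 k : ℝ) : ℂ)) * -(S⁻¹ * R * P⁻¹)) k j‖^2 :=
      Finset.sum_nonneg (fun k _ => Finset.sum_nonneg (fun j _ => by positivity))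
    linarith
  · rw [hIopt, re_det_conj]
    have hOmsq : (Omega S ^ 2).det.re = ∏ k, (ω k)^2 := by
      rw [sq, hOm, Matrix.diagonal_mul_diagonal, Matrix.det_diagonal]
      have h1 : ∀ k : Fin m, ((ω k:ℝ):ℂ) * ((ω k:ℝ):ℂ) = ((((ω k)^2 : ℝ)) : ℂ) := by
        intro k; push_cast; ring
      rw [Finset.prod_congr rfl (fun k _ => h1 k), ← Complex.ofReal_prod, Complex.ofReal_re]
    rw [hOmsq, Real.log_prod (fun k _ => pow_ne_zero 2 (hωne k))]
    push_cast
    ring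
end
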